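/- arXiv:2603.29001 — 9 statements merged into one kernel-verified Lean document; each statement's English description precedes it below -/
import Mathlib

section
/- Let A, B ∈ ℝ^{N×s} have full column rank, with thin QR decompositions A = Q_A R_A and B = Q_B R_B, and let Q_Aᵀ Q_B = U Σ Vᵀ be a singular value decomposition with U, V ∈ ℝ^{s×s} orthogonal and Σ = diag(σ_1,…,σ_s). Then the consistency matrix satisfies the similarity identity I_s − (A†B)(B†A) = (R_A⁻¹ U) (I_s − Σ²) (R_A⁻¹ U)⁻¹. -/
open Matrix

/-- The four Penrose conditions characterizing the Moore–Penrose pseudoinverse `Md` of `M`. -/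
def IsMoorePenrose {N s : ℕ} (M : Matrix (Fin N) (Fin s) ℝ)
    (Md : Matrix (Fin s) (Fin N) ℝ) : Prop :=
  M * Md * M = M ∧ Md * M * Md = Md ∧ (M * Md)ᵀ = M * Md ∧ (Md * M)ᵀ = Md * M

lemma mp_unique {N s : ℕ} {M : Matrix (Fin N) (Fin s) ℝ} {X Y : Matrix (Fin s) (Fin N) ℝ}
    (hX : IsMoorePenrose M X) (hY : IsMoorePenrose M Y) : X = Y := by
  obtain ⟨hX1, hX2, hX3, hX4⟩ := hX
  obtain ⟨hY1, hY2, hY3, hY4⟩ := hY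
  have h1 : M * X = M * Y := by
    calc M * X = (M * Y * M) * X := by rw [hY1]
      _ = (M * Y) * (M * X) := by rw [Matrix.mul_assoc]
      _ = ((M * X) * (M * Y))ᵀ := by rw [transpose_mul, hX3, hY3]
      _ = (M * X * M * Y)ᵀ := by rw [Matrix.mul_assoc (M * X)]
      _ = (M * Y)ᵀ := by rw [hX1]
      _ = M * Y := hY3
  have h2 : X * M = Y * M := by
    calc X * M = X * (M * Y * M) := by rw [hY1]
      _ = (X * M) * (Y * M) := by simp only [Matrix.mul_assoc]
      _ = ((Y * M) * (X * M))ᵀ := by rw [transpose_mul, hX4, hY4]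
      _ = (Y * (M * X * M))ᵀ := by simp only [Matrix.mul_assoc]
      _ = (Y * M)ᵀ := by rw [hX1]
      _ = Y * M := hY4
  calc X = X * M * X := hX2.symm
    _ = X * (M * Y) := by rw [Matrix.mul_assoc, h1]
    _ = (Y * M) * Y := by rw [← Matrix.mul_assoc, h2]
    _ = Y := hY2

lemma qr_mp {N s : ℕ} {A Q : Matrix (Fin N) (Fin s) ℝ} {R : Matrix (Fin s) (Fin s) ℝ}
    (hQR : A = Q * R) (hQ : Qᵀ * Q = 1) (hRunit : IsUnit R.det) :
    IsMoorePenrose A (R⁻¹ * Qᵀ) := by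
  have hR1 : R⁻¹ * R = 1 := Matrix.nonsing_inv_mul R hRunit
  have hR2 : R * R⁻¹ = 1 := Matrix.mul_nonsing_inv R hRunit
  have hMdA : (R⁻¹ * Qᵀ) * A = 1 := by
    rw [hQR, Matrix.mul_assoc, ← Matrix.mul_assoc Qᵀ, hQ, Matrix.one_mul, hR1]
  have hAMd : A * (R⁻¹ * Qᵀ) = Q * Qᵀ := by
    rw [hQR, Matrix.mul_assoc, ← Matrix.mul_assoc R, hR2, Matrix.one_mul]
  refine ⟨?_, ?_, ?_, ?_⟩
  · rw [Matrix.mul_assoc, hMdA, Matrix.mul_one]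
  · rw [hMdA, Matrix.one_mul]
  · rw [hAMd, transpose_mul, transpose_transpose]
  · rw [hMdA, transpose_one]

/-- If `A = Q_A R_A`, `B = Q_B R_B` are thin QR decompositions of the
full-column-rank matrices `A, B ∈ ℝ^{N×s}` and `Q_Aᵀ Q_B = U Σ Vᵀ` is an SVD, then the
consistency matrix satisfies
`I − (A†B)(B†A) = (R_A⁻¹ U)(I − Σ²)(R_A⁻¹ U)⁻¹`. -/
theorem stmt_0 {N s : ℕ}
    (A B QA QB : Matrix (Fin N) (Fin s) ℝ)
    (RA RB U V Sig : Matrix (Fin s) (Fin s) ℝ)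
    (σ : Fin s → ℝ)
    (Adag Bdag : Matrix (Fin s) (Fin N) ℝ)
    -- full column rank
    (hArank : A.rank = s) (hBrank : B.rank = s)
    -- thin QR decomposition of A
    (hAQR : A = QA * RA) (hQA : QAᵀ * QA = 1)
    (hRAtri : RA.BlockTriangular id) (hRAunit : IsUnit RA.det)
    -- thin QR decomposition of B
    (hBQR : B = QB * RB) (hQB : QBᵀ * QB = 1)
    (hRBtri : RB.BlockTriangular id) (hRBunit : IsUnit RB.det)
    -- SVD of Q_Aᵀ Q_B with U, V orthogonal and Σ = diag(σ₁,…,σ_s), σ₁ ≥ … ≥ σ_s ≥ 0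
    (hUorth : Uᵀ * U = 1) (hUorth' : U * Uᵀ = 1)
    (hVorth : Vᵀ * V = 1) (hVorth' : V * Vᵀ = 1)
    (hSig : Sig = Matrix.diagonal σ)
    (hσdec : Antitone σ) (hσnonneg : ∀ i, 0 ≤ σ i)
    (hSVD : QAᵀ * QB = U * Sig * Vᵀ)
    -- Moore–Penrose pseudoinverses of A and B
    (hAdag : IsMoorePenrose A Adag) (hBdag : IsMoorePenrose B Bdag) :
    (1 : Matrix (Fin s) (Fin s) ℝ) - (Adag * B) * (Bdag * A)
      = (RA⁻¹ * U) * (1 - Sig ^ 2) * (RA⁻¹ * U)⁻¹ := by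
  have hA : Adag = RA⁻¹ * QAᵀ := mp_unique hAdag (qr_mp hAQR hQA hRAunit)
  have hB : Bdag = RB⁻¹ * QBᵀ := mp_unique hBdag (qr_mp hBQR hQB hRBunit)
  have hRA1 : RA⁻¹ * RA = 1 := Matrix.nonsing_inv_mul RA hRAunit
  have hRA2 : RA * RA⁻¹ = 1 := Matrix.mul_nonsing_inv RA hRAunit
  have hRB1 : RB⁻¹ * RB = 1 := Matrix.nonsing_inv_mul RB hRBunit
  have hRB2 : RB * RB⁻¹ = 1 := Matrix.mul_nonsing_inv RB hRBunit
  have hSigT : Sigᵀ = Sig := by rw [hSig, Matrix.diagonal_transpose]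
  have hSVD' : QBᵀ * QA = V * Sig * Uᵀ := by
    have := congrArg Matrix.transpose hSVD
    simpa [Matrix.transpose_mul, hSigT, Matrix.mul_assoc] using this
  have hinv : (RA⁻¹ * U)⁻¹ = Uᵀ * RA := by
    apply Matrix.inv_eq_right_inv
    rw [Matrix.mul_assoc, ← Matrix.mul_assoc U, hUorth', Matrix.one_mul, hRA1]
  have hAB : Adag * B = RA⁻¹ * (U * Sig * Vᵀ) * RB := by
    rw [hA, hBQR, Matrix.mul_assoc, ← Matrix.mul_assoc QAᵀ, hSVD, ← Matrix.mul_assoc]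
  have hBA : Bdag * A = RB⁻¹ * (V * Sig * Uᵀ) * RA := by
    rw [hB, hAQR, Matrix.mul_assoc, ← Matrix.mul_assoc QBᵀ, hSVD', ← Matrix.mul_assoc]
  have key : (Adag * B) * (Bdag * A) = RA⁻¹ * U * Sig ^ 2 * (Uᵀ * RA) := by
    rw [hAB, hBA, sq]
    calc RA⁻¹ * (U * Sig * Vᵀ) * RB * (RB⁻¹ * (V * Sig * Uᵀ) * RA)
        = RA⁻¹ * (U * Sig * ((Vᵀ * (RB * RB⁻¹) * V) * Sig)) * (Uᵀ * RA) := by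
          simp only [Matrix.mul_assoc]
      _ = RA⁻¹ * U * (Sig * Sig) * (Uᵀ * RA) := by
          rw [hRB2, Matrix.mul_one, hVorth, Matrix.one_mul]
          simp only [Matrix.mul_assoc]
  rw [key, hinv]
  have expand : RA⁻¹ * U * (1 - Sig ^ 2) * (Uᵀ * RA)
      = RA⁻¹ * U * (Uᵀ * RA) - RA⁻¹ * U * Sig ^ 2 * (Uᵀ * RA) := by
    rw [Matrix.mul_sub, Matrix.sub_mul, Matrix.mul_one]
  rw [expand]
  have h1 : RA⁻¹ * U * (Uᵀ * RA) = 1 := by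
    rw [Matrix.mul_assoc, ← Matrix.mul_assoc U, hUorth', Matrix.one_mul, hRA1]
  rw [h1]
end

section
/- Let A, B ∈ ℝ^{N×s} have full column rank, with thin QR decompositions A = Q_A R_A and B = Q_B R_B, and let σ_1 ≥ … ≥ σ_s ≥ 0 be the singular values of Q_Aᵀ Q_B. Then the characteristic polynomial of the consistency matrix M_c = I_s − (A†B)(B†A) equals ∏_{i=1}^{s} (X − (1 − σ_i²)); in particular, the eigenvalues of M_c, with multiplicity, are exactly 1 − σ_i² for i = 1,…,s. -/
open Matrix Polynomial

lemma det_smul_one_add_mul_comm {K : Type*} [Field K] {n : Type*} [Fintype n] [DecidableEq n]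
    (c : K) (A B : Matrix n n K) :
    (c • (1 : Matrix n n K) + A * B).det = (c • (1 : Matrix n n K) + B * A).det := by
  rcases eq_or_ne c 0 with rfl | hc
  · simp [Matrix.det_mul, mul_comm]
  · have key : ∀ X Y : Matrix n n K,
        c • (1 : Matrix n n K) + X * Y = c • (1 + c⁻¹ • (X * Y)) := by
      intro X Y
      rw [smul_add, smul_smul, mul_inv_cancel₀ hc, one_smul]
    rw [key A B, key B A, Matrix.det_smul, Matrix.det_smul]
    congr 1
    rw [← smul_mul_assoc c⁻¹ A B, ← mul_smul_comm c⁻¹ B A]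
    exact Matrix.det_one_add_mul_comm _ _

lemma charpoly_one_sub_mul_comm {n : Type*} [Fintype n] [DecidableEq n]
    (A B : Matrix n n ℝ) : (1 - A * B).charpoly = (1 - B * A).charpoly := by
  set K := FractionRing (Polynomial ℝ)
  have hinj : Function.Injective (algebraMap (Polynomial ℝ) K) :=
    IsFractionRing.injective _ _
  apply hinj
  let φ : Polynomial ℝ →+* K := (algebraMap (Polynomial ℝ) K : _)
  show φ _ = φ _
  rw [Matrix.charpoly, Matrix.charpoly, RingHom.map_det, RingHom.map_det]
  have hmap : ∀ M : Matrix n n ℝ, φ.mapMatrix (charmatrix M)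
      = (φ X) • (1 : Matrix n n K) - (φ.comp C).mapMatrix M := by
    intro M
    ext i j
    by_cases h : i = j <;>
      simp [h, charmatrix_apply, Matrix.one_apply, Matrix.diagonal_apply]
  rw [hmap, hmap]
  simp only [map_sub, _root_.map_one, _root_.map_mul]
  have hre : ∀ X Y : Matrix n n K,
      (φ Polynomial.X) • (1 : Matrix n n K) - (1 - X * Y)
        = (φ Polynomial.X - 1) • 1 + X * Y := by
    intro X Y
    rw [sub_smul, one_smul]
    abel
  rw [hre, hre, det_smul_one_add_mul_comm]

lemma mp_unique_s1 {N s : ℕ} {M : Matrix (Fin N) (Fin s) ℝ} {P Q : Matrix (Fin s) (Fin N) ℝ}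
    (hP : IsMoorePenrose M P) (hQ : IsMoorePenrose M Q) : P = Q := by
  obtain ⟨hP1, hP2, hP3, hP4⟩ := hP
  obtain ⟨hQ1, hQ2, hQ3, hQ4⟩ := hQ
  have h1 : P = P * M * Q := by
    calc P = P * M * P := hP2.symm
      _ = P * (M * P) := by rw [Matrix.mul_assoc]
      _ = P * (M * P)ᵀ := by rw [hP3]
      _ = P * ((M * Q) * (M * P))ᵀ := by rw [← Matrix.mul_assoc (M * Q) M P, hQ1]
      _ = P * ((M * P)ᵀ * (M * Q)ᵀ) := by rw [Matrix.transpose_mul]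
      _ = P * ((M * P) * (M * Q)) := by rw [hP3, hQ3]
      _ = P * M * P * (M * Q) := by simp only [Matrix.mul_assoc]
      _ = P * (M * Q) := by rw [hP2]
      _ = P * M * Q := by rw [Matrix.mul_assoc]
  have h2 : Q = P * M * Q := by
    calc Q = Q * M * Q := hQ2.symm
      _ = (Q * M)ᵀ * Q := by rw [hQ4]
      _ = ((Q * M) * (P * M))ᵀ * Q := by
            rw [Matrix.mul_assoc Q M (P * M), ← Matrix.mul_assoc M P M, hP1]
      _ = ((P * M)ᵀ * (Q * M)ᵀ) * Q := by rw [Matrix.transpose_mul]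
      _ = ((P * M) * (Q * M)) * Q := by rw [hP4, hQ4]
      _ = (P * M) * ((Q * M) * Q) := by rw [Matrix.mul_assoc]
      _ = (P * M) * (Q * M * Q) := rfl
      _ = (P * M) * Q := by rw [hQ2]
  exact h1.trans h2.symm

/-- With `A = Q_A R_A`, `B = Q_B R_B` thin QR decompositions of the
full-column-rank matrices `A, B ∈ ℝ^{N×s}` and `σ₁ ≥ … ≥ σ_s ≥ 0` the singular values of
`Q_Aᵀ Q_B` (i.e. the square roots of the eigenvalues of `(Q_AᵀQ_B)ᵀ(Q_AᵀQ_B)`, listed in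
decreasing order), the characteristic polynomial of the consistency matrix
`M_c = I − (A†B)(B†A)` equals `∏ᵢ (X − (1 − σᵢ²))`; in particular the eigenvalues of `M_c`,
with multiplicity, are exactly `1 − σᵢ²`, `i = 1,…,s`. -/
theorem stmt_1 {N s : ℕ}
    (A B QA QB : Matrix (Fin N) (Fin s) ℝ)
    (RA RB V : Matrix (Fin s) (Fin s) ℝ)
    (σ : Fin s → ℝ)
    (Adag Bdag : Matrix (Fin s) (Fin N) ℝ)
    -- full column rank
    (hArank : A.rank = s) (hBrank : B.rank = s)
    -- thin QR decomposition of A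
    (hAQR : A = QA * RA) (hQA : QAᵀ * QA = 1)
    (hRAtri : RA.BlockTriangular id) (hRAunit : IsUnit RA.det)
    -- thin QR decomposition of B
    (hBQR : B = QB * RB) (hQB : QBᵀ * QB = 1)
    (hRBtri : RB.BlockTriangular id) (hRBunit : IsUnit RB.det)
    -- the σᵢ are the singular values of Q_Aᵀ Q_B : the σᵢ² are the eigenvalues of
    -- (Q_AᵀQ_B)ᵀ(Q_AᵀQ_B) (via an orthogonal eigendecomposition), decreasing and nonnegative
    (hVorth : Vᵀ * V = 1) (hVorth' : V * Vᵀ = 1)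
    (hσdec : Antitone σ) (hσnonneg : ∀ i, 0 ≤ σ i)
    (hsv : (QAᵀ * QB)ᵀ * (QAᵀ * QB) = V * Matrix.diagonal (fun i => σ i ^ 2) * Vᵀ)
    -- Moore–Penrose pseudoinverses of A and B
    (hAdag : IsMoorePenrose A Adag) (hBdag : IsMoorePenrose B Bdag) :
    ((1 : Matrix (Fin s) (Fin s) ℝ) - (Adag * B) * (Bdag * A)).charpoly
        = ∏ i : Fin s, (X - C (1 - σ i ^ 2)) ∧
      ((1 : Matrix (Fin s) (Fin s) ℝ) - (Adag * B) * (Bdag * A)).charpoly.roots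
        = Multiset.map (fun i => 1 - σ i ^ 2) Finset.univ.val := by
  have hRAi : RA⁻¹ * RA = 1 := Matrix.nonsing_inv_mul RA hRAunit
  have hRAi' : RA * RA⁻¹ = 1 := Matrix.mul_nonsing_inv RA hRAunit
  have hRBi : RB⁻¹ * RB = 1 := Matrix.nonsing_inv_mul RB hRBunit
  have hRBi' : RB * RB⁻¹ = 1 := Matrix.mul_nonsing_inv RB hRBunit
  -- the explicit pseudoinverses
  have hXA : (RA⁻¹ * QAᵀ) * A = 1 := by
    rw [hAQR, Matrix.mul_assoc, ← Matrix.mul_assoc QAᵀ QA RA, hQA, Matrix.one_mul, hRAi]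
  have hXB : (RB⁻¹ * QBᵀ) * B = 1 := by
    rw [hBQR, Matrix.mul_assoc, ← Matrix.mul_assoc QBᵀ QB RB, hQB, Matrix.one_mul, hRBi]
  have hAAd : A * (RA⁻¹ * QAᵀ) = QA * QAᵀ := by
    rw [hAQR, Matrix.mul_assoc, ← Matrix.mul_assoc RA RA⁻¹ QAᵀ, hRAi', Matrix.one_mul]
  have hBBd : B * (RB⁻¹ * QBᵀ) = QB * QBᵀ := by
    rw [hBQR, Matrix.mul_assoc, ← Matrix.mul_assoc RB RB⁻¹ QBᵀ, hRBi', Matrix.one_mul]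
  have hMPA : IsMoorePenrose A (RA⁻¹ * QAᵀ) := by
    refine ⟨?_, ?_, ?_, ?_⟩
    · rw [Matrix.mul_assoc, hXA, Matrix.mul_one]
    · rw [hXA, Matrix.one_mul]
    · rw [hAAd, Matrix.transpose_mul, Matrix.transpose_transpose]
    · rw [hXA, Matrix.transpose_one]
  have hMPB : IsMoorePenrose B (RB⁻¹ * QBᵀ) := by
    refine ⟨?_, ?_, ?_, ?_⟩
    · rw [Matrix.mul_assoc, hXB, Matrix.mul_one]
    · rw [hXB, Matrix.one_mul]
    · rw [hBBd, Matrix.transpose_mul, Matrix.transpose_transpose]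
    · rw [hXB, Matrix.transpose_one]
  have hAdag_eq : Adag = RA⁻¹ * QAᵀ := mp_unique_s1 hAdag hMPA
  have hBdag_eq : Bdag = RB⁻¹ * QBᵀ := mp_unique_s1 hBdag hMPB
  set M := QAᵀ * QB with hM
  have hprod : (Adag * B) * (Bdag * A) = (RA⁻¹ * (M * Mᵀ)) * RA := by
    rw [hAdag_eq, hBdag_eq, hAQR, hBQR, hM, Matrix.transpose_mul,
      Matrix.transpose_transpose]
    simp only [Matrix.mul_assoc]
    rw [← Matrix.mul_assoc RB RB⁻¹, hRBi', Matrix.one_mul]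
  have hcp : ((1 : Matrix (Fin s) (Fin s) ℝ) - (Adag * B) * (Bdag * A)).charpoly
      = ∏ i : Fin s, (X - C (1 - σ i ^ 2)) := by
    rw [hprod, charpoly_one_sub_mul_comm, ← Matrix.mul_assoc, hRAi', Matrix.one_mul,
      charpoly_one_sub_mul_comm M Mᵀ]
    have h3 : Mᵀ * M = (V * Matrix.diagonal fun i => σ i ^ 2) * Vᵀ := hsv
    rw [h3, charpoly_one_sub_mul_comm, ← Matrix.mul_assoc, hVorth, Matrix.one_mul]
    have h5 : (1 : Matrix (Fin s) (Fin s) ℝ) - Matrix.diagonal (fun i => σ i ^ 2)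
        = Matrix.diagonal (fun i => 1 - σ i ^ 2) := by
      ext i j
      by_cases h : i = j <;> simp [h, Matrix.one_apply, Matrix.diagonal_apply]
    rw [h5, Matrix.charpoly_of_upperTriangular _ (Matrix.blockTriangular_diagonal _)]
    simp
  refine ⟨hcp, ?_⟩
  rw [hcp]
  have h7 : ∏ i : Fin s, (X - C (1 - σ i ^ 2))
      = ((Finset.univ.val.map fun i => (1 : ℝ) - σ i ^ 2).map fun a => X - C a).prod := by
    rw [Multiset.map_map, Finset.prod_eq_multiset_prod]
    rfl
  rw [h7, Polynomial.roots_multiset_prod_X_sub_C]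
end

section
/- Let A, B ∈ ℝ^{N×s} have full column rank, with thin QR decompositions A = Q_A R_A and B = Q_B R_B, and let Q_Aᵀ Q_B = U Σ Vᵀ be a singular value decomposition with Σ = diag(σ_1,…,σ_s). For each i ∈ {1,…,s}, the vector v_i := R_A⁻¹ u_i, where u_i is the i-th column of U, satisfies: (1) (I_s − (A†B)(B†A)) v_i = (1 − σ_i²) v_i, and (2) A v_i = Q_A u_i, which is a unit vector in the column space of A. -/
open Matrix

lemma mp_qr {N s : ℕ} {A QA : Matrix (Fin N) (Fin s) ℝ} {RA : Matrix (Fin s) (Fin s) ℝ}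
    (hAQR : A = QA * RA) (hQA : QAᵀ * QA = 1) (hRAunit : IsUnit RA.det) :
    IsMoorePenrose A (RA⁻¹ * QAᵀ) := by
  have hRA1 : RA * RA⁻¹ = 1 := Matrix.mul_nonsing_inv _ hRAunit
  have hRA2 : RA⁻¹ * RA = 1 := Matrix.nonsing_inv_mul _ hRAunit
  have hXA : (RA⁻¹ * QAᵀ) * A = 1 := by
    rw [hAQR, Matrix.mul_assoc, ← Matrix.mul_assoc QAᵀ, hQA, Matrix.one_mul, hRA2]
  have hAX : A * (RA⁻¹ * QAᵀ) = QA * QAᵀ := by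
    rw [hAQR, Matrix.mul_assoc, ← Matrix.mul_assoc RA, hRA1, Matrix.one_mul]
  refine ⟨?_, ?_, ?_, ?_⟩
  · rw [hAX, hAQR, Matrix.mul_assoc QA QAᵀ, ← Matrix.mul_assoc QAᵀ, hQA, Matrix.one_mul]
  · rw [hXA, Matrix.one_mul]
  · rw [hAX, transpose_mul, transpose_transpose]
  · rw [hXA, transpose_one]

/-- With `A = Q_A R_A`, `B = Q_B R_B` thin QR decompositions of the
full-column-rank matrices `A, B ∈ ℝ^{N×s}` and `Q_Aᵀ Q_B = U Σ Vᵀ` an SVD, for each `i` the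
vector `vᵢ := R_A⁻¹ uᵢ` (with `uᵢ` the `i`-th column of `U`) satisfies
(1) `(I − (A†B)(B†A)) vᵢ = (1 − σᵢ²) vᵢ`, and
(2) `A vᵢ = Q_A uᵢ`, a unit vector lying in the column space of `A`. -/
theorem stmt_2 {N s : ℕ}
    (A B QA QB : Matrix (Fin N) (Fin s) ℝ)
    (RA RB U V Sig : Matrix (Fin s) (Fin s) ℝ)
    (σ : Fin s → ℝ)
    (Adag Bdag : Matrix (Fin s) (Fin N) ℝ)
    -- full column rank
    (hArank : A.rank = s) (hBrank : B.rank = s)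
    -- thin QR decomposition of A
    (hAQR : A = QA * RA) (hQA : QAᵀ * QA = 1)
    (hRAtri : RA.BlockTriangular id) (hRAunit : IsUnit RA.det)
    -- thin QR decomposition of B
    (hBQR : B = QB * RB) (hQB : QBᵀ * QB = 1)
    (hRBtri : RB.BlockTriangular id) (hRBunit : IsUnit RB.det)
    -- SVD of Q_Aᵀ Q_B with U, V orthogonal and Σ = diag(σ₁,…,σ_s), σ₁ ≥ … ≥ σ_s ≥ 0
    (hUorth : Uᵀ * U = 1) (hUorth' : U * Uᵀ = 1)
    (hVorth : Vᵀ * V = 1) (hVorth' : V * Vᵀ = 1)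
    (hSig : Sig = Matrix.diagonal σ)
    (hσdec : Antitone σ) (hσnonneg : ∀ i, 0 ≤ σ i)
    (hSVD : QAᵀ * QB = U * Sig * Vᵀ)
    -- Moore–Penrose pseudoinverses of A and B
    (hAdag : IsMoorePenrose A Adag) (hBdag : IsMoorePenrose B Bdag)
    (i : Fin s) :
    -- vᵢ = R_A⁻¹ uᵢ where uᵢ is the i-th column of U
    ((1 : Matrix (Fin s) (Fin s) ℝ) - (Adag * B) * (Bdag * A)).mulVec
        (RA⁻¹.mulVec (fun k => U k i))
      = (1 - σ i ^ 2) • RA⁻¹.mulVec (fun k => U k i) ∧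
    A.mulVec (RA⁻¹.mulVec (fun k => U k i)) = QA.mulVec (fun k => U k i) ∧
    (∑ k, (A.mulVec (RA⁻¹.mulVec (fun k => U k i)) k) ^ 2 = 1) ∧
    A.mulVec (RA⁻¹.mulVec (fun k => U k i)) ∈ LinearMap.range A.mulVecLin := by
  have hRA1 : RA * RA⁻¹ = 1 := Matrix.mul_nonsing_inv _ hRAunit
  have hRA2 : RA⁻¹ * RA = 1 := Matrix.nonsing_inv_mul _ hRAunit
  have hRB1 : RB * RB⁻¹ = 1 := Matrix.mul_nonsing_inv _ hRBunit
  have h1 : Adag = RA⁻¹ * QAᵀ := mp_unique hAdag (mp_qr hAQR hQA hRAunit)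
  have h2 : Bdag = RB⁻¹ * QBᵀ := mp_unique hBdag (mp_qr hBQR hQB hRBunit)
  have hQBA : QBᵀ * QA = V * Sig * Uᵀ := by
    have h := congrArg Matrix.transpose hSVD
    simp only [transpose_mul, transpose_transpose] at h
    rw [h, hSig, Matrix.diagonal_transpose]
    simp [Matrix.mul_assoc]
  -- helper rewriting lemmas in right-associated form
  have k1 : ∀ X : Matrix (Fin s) (Fin s) ℝ, RB * (RB⁻¹ * X) = X := fun X => by
    rw [← Matrix.mul_assoc, hRB1, Matrix.one_mul]
  have k2 : ∀ X : Matrix (Fin s) (Fin s) ℝ, RA * (RA⁻¹ * X) = X := fun X => by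
    rw [← Matrix.mul_assoc, hRA1, Matrix.one_mul]
  have k3 : ∀ X : Matrix (Fin s) (Fin s) ℝ, Vᵀ * (V * X) = X := fun X => by
    rw [← Matrix.mul_assoc, hVorth, Matrix.one_mul]
  have k5 : ∀ X : Matrix (Fin s) (Fin s) ℝ, QAᵀ * (QB * X) = U * (Sig * (Vᵀ * X)) := fun X => by
    rw [← Matrix.mul_assoc, hSVD]; simp [Matrix.mul_assoc]
  have k6 : ∀ X : Matrix (Fin s) (Fin s) ℝ, QBᵀ * (QA * X) = V * (Sig * (Uᵀ * X)) := fun X => by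
    rw [← Matrix.mul_assoc, hQBA]; simp [Matrix.mul_assoc]
  have hPU : (Adag * B) * (Bdag * A) * (RA⁻¹ * U) = (RA⁻¹ * U) * (Sig * Sig) := by
    rw [h1, h2, hAQR, hBQR]
    simp only [Matrix.mul_assoc]
    rw [k2, k6, hUorth, Matrix.mul_one, k1, k5, k3]
  -- vector-level facts
  set e : Fin s → ℝ := Pi.single i 1 with he
  have hu : (fun k => U k i) = U.mulVec e := by
    funext k
    simp [Matrix.mulVec, dotProduct, he, Pi.single_apply]
  have hv : RA⁻¹.mulVec (fun k => U k i) = (RA⁻¹ * U).mulVec e := by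
    rw [hu, Matrix.mulVec_mulVec]
  have hSige : (Sig * Sig).mulVec e = (σ i ^ 2) • e := by
    rw [hSig, Matrix.diagonal_mul_diagonal]
    funext k
    rcases eq_or_ne k i with rfl | hk
    · simp [Matrix.mulVec_diagonal, he, sq]
    · simp [Matrix.mulVec_diagonal, he, Pi.single_apply, hk]
  have goal1 : ((1 : Matrix (Fin s) (Fin s) ℝ) - (Adag * B) * (Bdag * A)).mulVec
      (RA⁻¹.mulVec (fun k => U k i)) = (1 - σ i ^ 2) • RA⁻¹.mulVec (fun k => U k i) := by
    have hP : (RA⁻¹ * U * (Sig * Sig)).mulVec e = (σ i ^ 2) • ((RA⁻¹ * U).mulVec e) := by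
      rw [← Matrix.mulVec_mulVec, hSige, Matrix.mulVec_smul]
    rw [Matrix.sub_mulVec, Matrix.one_mulVec, hv, Matrix.mulVec_mulVec, hPU, hP,
      sub_smul, one_smul]
  have goal2 : A.mulVec (RA⁻¹.mulVec (fun k => U k i)) = QA.mulVec (fun k => U k i) := by
    rw [Matrix.mulVec_mulVec, hAQR, Matrix.mul_assoc, hRA1, Matrix.mul_one]
  have goal3 : ∑ k, (A.mulVec (RA⁻¹.mulVec (fun k => U k i)) k) ^ 2 = 1 := by
    rw [goal2]
    set u : Fin s → ℝ := fun k => U k i with hud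
    have huu : u ⬝ᵥ u = 1 := by
      have h := congrFun (congrFun hUorth i) i
      simpa [Matrix.mul_apply, Matrix.one_apply, dotProduct, hud] using h
    have hQu : (QA.mulVec u) ⬝ᵥ (QA.mulVec u) = u ⬝ᵥ u := by
      rw [Matrix.dotProduct_mulVec, ← Matrix.mulVec_transpose, Matrix.mulVec_mulVec, hQA,
        Matrix.one_mulVec]
    calc ∑ k, (QA.mulVec u k) ^ 2 = (QA.mulVec u) ⬝ᵥ (QA.mulVec u) := by
          simp [dotProduct, sq]
    _ = 1 := by rw [hQu, huu]
  exact ⟨goal1, goal2, goal3, ⟨RA⁻¹.mulVec (fun k => U k i), rfl⟩⟩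
end

section
/- Let A, B ∈ ℝ^{N×s} with A having full column rank, and let M_c = I_s − (A†B)(B†A) be the consistency matrix. If v ∈ ℝ^s is an eigenvector of M_c with eigenvalue λ, then ‖A v − B B† A v‖² = λ ‖A v‖², where ‖·‖ is the Euclidean norm on ℝ^N; that is, the squared distance of Av to the column space of B equals λ times the squared norm of Av. -/
open Matrix

private lemma dshift {m n : ℕ} (M : Matrix (Fin m) (Fin n) ℝ) (x : Fin n → ℝ) (y : Fin m → ℝ) :
    (M *ᵥ x) ⬝ᵥ y = x ⬝ᵥ (Mᵀ *ᵥ y) := by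
  rw [dotProduct_comm, Matrix.dotProduct_mulVec, ← Matrix.mulVec_transpose,
    dotProduct_comm]

private lemma sumsq_eq_dot {n : ℕ} (f : Fin n → ℝ) : ∑ i, f i ^ 2 = f ⬝ᵥ f := by
  simp [dotProduct, sq]

/-- Let `A, B ∈ ℝ^{N×s}` with `A` of full column rank, and let
`M_c = I − (A†B)(B†A)`. If `v` is an eigenvector of `M_c` with eigenvalue `λ`, then
`‖A v − B B† A v‖² = λ ‖A v‖²` in the Euclidean norm of `ℝ^N`: the squared distance of
`Av` to the column space of `B` equals `λ` times the squared norm of `Av`. -/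
theorem stmt_3 {N s : ℕ}
    (A B : Matrix (Fin N) (Fin s) ℝ)
    (Adag Bdag : Matrix (Fin s) (Fin N) ℝ)
    (hArank : A.rank = s)
    (hAdag : IsMoorePenrose A Adag) (hBdag : IsMoorePenrose B Bdag)
    (v : Fin s → ℝ) (lam : ℝ) (hv : v ≠ 0)
    (heig : ((1 : Matrix (Fin s) (Fin s) ℝ) - (Adag * B) * (Bdag * A)).mulVec v = lam • v) :
    ∑ i, ((A.mulVec v - B.mulVec (Bdag.mulVec (A.mulVec v))) i) ^ 2
      = lam * ∑ i, (A.mulVec v i) ^ 2 := by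
  obtain ⟨hA1, -, hA3, -⟩ := hAdag
  obtain ⟨hB1, -, hB3, -⟩ := hBdag
  set w : Fin N → ℝ := A *ᵥ v with hw
  set P : Matrix (Fin N) (Fin N) ℝ := B * Bdag with hPdef
  have hPidem : P * P = P := by
    rw [hPdef, ← Matrix.mul_assoc, hB1]
  have hAt : Aᵀ * (A * Adag) = Aᵀ := by
    have h := congrArg Matrix.transpose hA1
    rw [Matrix.transpose_mul, hA3] at h
    exact h
  have hu : B *ᵥ (Bdag *ᵥ w) = P *ᵥ w := by
    rw [hPdef, Matrix.mulVec_mulVec]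
  set u : Fin N → ℝ := P *ᵥ w with hudef
  set t : ℝ := w ⬝ᵥ w with ht
  set p : ℝ := w ⬝ᵥ u with hp
  have huu : u ⬝ᵥ u = p := by
    rw [hp, hudef, dshift, hB3, Matrix.mulVec_mulVec, hPidem]
  have huw : u ⬝ᵥ w = p := by rw [dotProduct_comm, hp]
  have htv : t = v ⬝ᵥ ((Aᵀ * A) *ᵥ v) := by
    rw [ht, hw, dshift, Matrix.mulVec_mulVec]
  have hM : ((Adag * B) * (Bdag * A)) *ᵥ v = v - lam • v := by
    have h := heig
    rw [Matrix.sub_mulVec, Matrix.one_mulVec] at h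
    rw [← h]
    abel
  have key : Aᵀ * P * A = (Aᵀ * A) * ((Adag * B) * (Bdag * A)) := by
    conv_lhs => rw [hPdef, ← hAt]
    simp only [Matrix.mul_assoc]
  have hpt : p = t - lam * t := by
    have h2 : p = v ⬝ᵥ ((Aᵀ * P * A) *ᵥ v) := by
      rw [hp, hudef, hw, dshift, Matrix.mulVec_mulVec, Matrix.mulVec_mulVec]
    rw [h2, key, ← Matrix.mulVec_mulVec, hM, Matrix.mulVec_sub, Matrix.mulVec_smul,
      dotProduct_sub, dotProduct_smul, ← htv, smul_eq_mul]
  rw [sumsq_eq_dot, sumsq_eq_dot, hu, sub_dotProduct,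
    dotProduct_sub, dotProduct_sub, huw, huu, ← ht, ← hp, hpt]
  ring
end

section
/- Let A, B ∈ ℝ^{N×s} both have full column rank. Then every eigenvalue of the consistency matrix M_c = I_s − (A†B)(B†A) is real and lies in the closed interval [0, 1]. -/
open Matrix
open scoped ComplexOrder

lemma aux_isUnit_of_rank_eq_card {s : ℕ} {M : Matrix (Fin s) (Fin s) ℝ} (h : M.rank = s) :
    IsUnit M := by
  rw [Matrix.rank] at h
  have hr : LinearMap.range M.mulVecLin = ⊤ :=
    Submodule.eq_top_of_finrank_eq (by simp [h])
  rw [← Matrix.mulVec_surjective_iff_isUnit]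
  exact LinearMap.range_eq_top.mp hr

lemma aux_pinv_left_inv {N s : ℕ} {A : Matrix (Fin N) (Fin s) ℝ} {Adag : Matrix (Fin s) (Fin N) ℝ}
    (hArank : A.rank = s) (h : IsMoorePenrose A Adag) : Adag * A = 1 := by
  obtain ⟨h1, _, _, _⟩ := h
  have hidem : (Adag * A) * (Adag * A) = Adag * A := by
    rw [Matrix.mul_assoc Adag A (Adag * A), ← Matrix.mul_assoc A Adag A, h1]
  have hrk : (Adag * A).rank = s := by
    refine le_antisymm (Matrix.rank_le_width _) ?_
    calc s = A.rank := hArank.symm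
    _ = (A * (Adag * A)).rank := by rw [← Matrix.mul_assoc, h1]
    _ ≤ (Adag * A).rank := Matrix.rank_mul_le_right _ _
  exact (aux_isUnit_of_rank_eq_card hrk).mul_left_cancel (by rw [hidem, Matrix.mul_one])

lemma mapC_mul {m n o : ℕ} (L : Matrix (Fin m) (Fin n) ℝ) (M : Matrix (Fin n) (Fin o) ℝ) :
    (L * M).map Complex.ofReal = L.map Complex.ofReal * M.map Complex.ofReal :=
  Matrix.map_mul (f := Complex.ofRealHom)

lemma mapC_sub {m n : ℕ} (L M : Matrix (Fin m) (Fin n) ℝ) :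
    (L - M).map Complex.ofReal = L.map Complex.ofReal - M.map Complex.ofReal :=
  Matrix.map_sub _ (by simp) _ _

lemma mapC_transpose {m n : ℕ} (M : Matrix (Fin m) (Fin n) ℝ) :
    (Mᵀ).map Complex.ofReal = (M.map Complex.ofReal)ᴴ := by
  ext i j
  simp [Matrix.conjTranspose_apply]

lemma dotC {k : ℕ} (v : Fin k → ℂ) : 0 ≤ (star v ⬝ᵥ v).re ∧ (star v ⬝ᵥ v).im = 0 := by
  have h := dotProduct_star_self_nonneg (R := ℂ) v
  rw [Complex.le_def] at h
  exact ⟨by simpa using h.1, by simpa using h.2.symm⟩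

set_option maxHeartbeats 1000000 in
/-- If `A, B ∈ ℝ^{N×s}` both have full column rank, then every (complex)
eigenvalue of the consistency matrix `M_c = I − (A†B)(B†A)` is real and lies in `[0, 1]`. -/
theorem stmt_4 {N s : ℕ}
    (A B : Matrix (Fin N) (Fin s) ℝ)
    (Adag Bdag : Matrix (Fin s) (Fin N) ℝ)
    (hArank : A.rank = s) (hBrank : B.rank = s)
    (hAdag : IsMoorePenrose A Adag) (hBdag : IsMoorePenrose B Bdag) :
    ∀ μ : ℂ,
      (∃ z : Fin s → ℂ, z ≠ 0 ∧
        (((1 : Matrix (Fin s) (Fin s) ℝ) - (Adag * B) * (Bdag * A)).map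
            Complex.ofReal).mulVec z = μ • z) →
      μ.im = 0 ∧ 0 ≤ μ.re ∧ μ.re ≤ 1 := by
  rintro μ ⟨z, hz0, hz⟩
  have hA1 : Adag * A = 1 := aux_pinv_left_inv hArank hAdag
  obtain ⟨hA_1, hA_2, hA_3, hA_4⟩ := hAdag
  obtain ⟨hB_1, hB_2, hB_3, hB_4⟩ := hBdag
  -- real matrix identities
  have hGA : Aᵀ * A * Adag = Aᵀ := by
    rw [Matrix.mul_assoc, ← hA_3, Matrix.transpose_mul, ← Matrix.mul_assoc,
      ← Matrix.transpose_mul, hA1, Matrix.transpose_one, Matrix.one_mul]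
  have hPidem : (B * Bdag) * (B * Bdag) = B * Bdag := by
    rw [Matrix.mul_assoc B Bdag (B * Bdag), ← Matrix.mul_assoc Bdag B Bdag, hB_2]
  have hkey : (Aᵀ * A) * (1 - (Adag * B) * (Bdag * A))
      = Aᵀ * A - Aᵀ * ((B * Bdag) * A) := by
    rw [Matrix.mul_sub, Matrix.mul_one]
    congr 1
    rw [← Matrix.mul_assoc, ← Matrix.mul_assoc (Aᵀ * A) Adag B, hGA]
    simp only [Matrix.mul_assoc]
  -- complex versions
  set A' := A.map Complex.ofReal with hA'def
  set P' := (B * Bdag).map Complex.ofReal with hP'def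
  set G' := (Aᵀ * A).map Complex.ofReal with hG'def
  set Mc' := ((1 : Matrix (Fin s) (Fin s) ℝ) - (Adag * B) * (Bdag * A)).map Complex.ofReal
    with hMc'def
  have hG'AA : G' = A'ᴴ * A' := by rw [hG'def, mapC_mul, mapC_transpose]
  have hP'herm : P'ᴴ = P' := by rw [hP'def, ← mapC_transpose, hB_3]
  have hP'idem : P' * P' = P' := by rw [hP'def, ← mapC_mul, hPidem]
  have hkeyC : G' * Mc' = G' - A'ᴴ * (P' * A') := by
    have h := congrArg (fun M => M.map Complex.ofReal) hkey
    simp only [mapC_mul, mapC_sub, mapC_transpose, Matrix.mul_assoc] at h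
    simp only [hG'def, hMc'def, hP'def, hA'def, mapC_mul, mapC_sub, mapC_transpose,
      Matrix.mul_assoc]
    exact h
  -- quadratic forms
  set w : Fin N → ℂ := A'.mulVec z with hwdef
  have hg : star z ⬝ᵥ G'.mulVec z = star w ⬝ᵥ w := by
    rw [hG'AA, ← Matrix.mulVec_mulVec, Matrix.dotProduct_mulVec, ← Matrix.star_mulVec, ← hwdef]
  have hstarP : star (P'.mulVec w) = star w ᵥ* P' := by
    rw [Matrix.star_mulVec, hP'herm]
  have hwP : star w ⬝ᵥ P'.mulVec w = star (P'.mulVec w) ⬝ᵥ P'.mulVec w := by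
    conv_lhs => rw [← hP'idem, ← Matrix.mulVec_mulVec]
    rw [Matrix.dotProduct_mulVec, ← hstarP]
  have ht : star z ⬝ᵥ (A'ᴴ * (P' * A')).mulVec z
      = star (P'.mulVec w) ⬝ᵥ P'.mulVec w := by
    rw [← Matrix.mulVec_mulVec, Matrix.dotProduct_mulVec, ← Matrix.star_mulVec, ← hwdef,
      ← Matrix.mulVec_mulVec, ← hwP]
  -- the eigen equation for quadratic forms
  have hmain : μ * (star w ⬝ᵥ w) = star w ⬝ᵥ w - star (P'.mulVec w) ⬝ᵥ P'.mulVec w := by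
    have e1 : star z ⬝ᵥ (G' * Mc').mulVec z = μ * (star w ⬝ᵥ w) := by
      rw [← Matrix.mulVec_mulVec, hz, Matrix.mulVec_smul, dotProduct_smul,
        smul_eq_mul, hg]
    have e2 : star z ⬝ᵥ (G' * Mc').mulVec z
        = star w ⬝ᵥ w - star (P'.mulVec w) ⬝ᵥ P'.mulVec w := by
      rw [hkeyC, Matrix.sub_mulVec, dotProduct_sub, hg, ht]
    rw [← e1, e2]
  have hcross : star (P'.mulVec w) ⬝ᵥ w = star w ⬝ᵥ P'.mulVec w := by
    rw [Matrix.star_mulVec, ← Matrix.dotProduct_mulVec, hP'herm]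
  have hgt : star w ⬝ᵥ w - star (P'.mulVec w) ⬝ᵥ P'.mulVec w
      = star (w - P'.mulVec w) ⬝ᵥ (w - P'.mulVec w) := by
    rw [star_sub, sub_dotProduct, dotProduct_sub, dotProduct_sub,
      hwP, hcross, hwP]
    ring
  -- w ≠ 0
  have hw0 : w ≠ 0 := by
    intro h0
    have hzG : G'.mulVec z = 0 := by
      rw [hG'AA, ← Matrix.mulVec_mulVec, ← hwdef, h0, Matrix.mulVec_zero]
    have hGu : IsUnit G' := by
      have hrk : (Aᵀ * A).rank = s := by rw [Matrix.rank_transpose_mul_self, hArank]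
      have hGr := aux_isUnit_of_rank_eq_card hrk
      rw [Matrix.isUnit_iff_isUnit_det] at hGr ⊢
      have hdet : G'.det = Complex.ofReal ((Aᵀ * A).det) := by
        rw [hG'def]
        exact (RingHom.map_det Complex.ofRealHom _).symm
      rw [hdet, isUnit_iff_ne_zero]
      simpa [Complex.ofReal_ne_zero, isUnit_iff_ne_zero] using hGr
    have hinj := Matrix.mulVec_injective_iff_isUnit.mpr hGu
    exact hz0 (hinj (by simpa [Matrix.mulVec_zero] using hzG))
  have hgne : star w ⬝ᵥ w ≠ 0 := fun h => hw0 (dotProduct_star_self_eq_zero.mp h)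
  obtain ⟨hgre, hgim⟩ := dotC w
  obtain ⟨htre, htim⟩ := dotC (P'.mulVec w)
  obtain ⟨hure, huim⟩ := dotC (w - P'.mulVec w)
  have hgrpos : 0 < (star w ⬝ᵥ w).re := by
    rcases lt_or_eq_of_le hgre with h | h
    · exact h
    · exact absurd (Complex.ext h.symm hgim) hgne
  have him := congrArg Complex.im hmain
  have hre := congrArg Complex.re hmain
  rw [Complex.mul_im] at him
  rw [Complex.mul_re] at hre
  have hgtre : 0 ≤ (star w ⬝ᵥ w).re - (star (P'.mulVec w) ⬝ᵥ P'.mulVec w).re := by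
    have := congrArg Complex.re hgt
    simp only [Complex.sub_re] at this
    rw [this]; exact hure
  rw [Complex.sub_im, hgim, htim] at him
  rw [Complex.sub_re, hgim] at hre
  have hμim : μ.im = 0 := by
    have : μ.im * (star w ⬝ᵥ w).re = 0 := by linarith
    exact (mul_eq_zero.mp this).resolve_right (ne_of_gt hgrpos)
  rw [hμim] at hre
  have key : ∀ gr tr : ℝ, 0 < gr → 0 ≤ tr → 0 ≤ gr - tr →
      μ.re * gr - 0 * 0 = gr - tr → 0 ≤ μ.re ∧ μ.re ≤ 1 := by
    intro gr tr h1 h2 h3 h4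
    constructor <;> nlinarith
  exact ⟨hμim, key _ _ hgrpos htre hgtre hre⟩
end

section
/- Let A, B ∈ ℝ^{N×s} both have full column rank, and let λ_max be the largest eigenvalue of the consistency matrix M_c = I_s − (A†B)(B†A). Then λ_max equals the supremum, over unit vectors u in the column space of A, of ‖u − B B† u‖², i.e., λ_max = sup { ‖u − B B† u‖² : u ∈ col(A), ‖u‖ = 1 }. -/
open Matrix


local notation "⟪" x ", " y "⟫" => @inner ℝ _ _ x y

lemma sum_sq_eq_dot {n : ℕ} (x : Fin n → ℝ) : ∑ i, (x i) ^ 2 = x ⬝ᵥ x := by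
  simp [dotProduct, sq]

lemma dot_shift {m n : ℕ} (M : Matrix (Fin m) (Fin n) ℝ) (a : Fin n → ℝ) (y : Fin m → ℝ) :
    (M *ᵥ a) ⬝ᵥ y = a ⬝ᵥ (Mᵀ *ᵥ y) := by
  rw [dotProduct_mulVec, vecMul_transpose]

lemma inner_eq_dot {N : ℕ} (x y : EuclideanSpace ℝ (Fin N)) :
    ⟪x, y⟫ = (WithLp.equiv 2 _ x) ⬝ᵥ (WithLp.equiv 2 _ y) := by
  simp [PiLp.inner_apply, RCLike.inner_apply, dotProduct, mul_comm]

lemma toEuclideanLin_comp {N m s : ℕ} (M : Matrix (Fin N) (Fin m) ℝ)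
    (A : Matrix (Fin m) (Fin s) ℝ) (x : EuclideanSpace ℝ (Fin s)) :
    toEuclideanLin M (toEuclideanLin A x) = toEuclideanLin (M * A) x := by
  simp [toEuclideanLin_apply, Matrix.mulVec_mulVec]

set_option maxHeartbeats 2000000 in
/-- Let `A, B ∈ ℝ^{N×s}` both have full column rank, and let `λ_max` be the
largest eigenvalue of the consistency matrix `M_c = I − (A†B)(B†A)`. Then
`λ_max = sup { ‖u − B B† u‖² : u ∈ col(A), ‖u‖ = 1 }` (Euclidean norm on `ℝ^N`). -/
theorem stmt_5 {N s : ℕ}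
    (A B : Matrix (Fin N) (Fin s) ℝ)
    (Adag Bdag : Matrix (Fin s) (Fin N) ℝ)
    (hArank : A.rank = s) (hBrank : B.rank = s)
    (hAdag : IsMoorePenrose A Adag) (hBdag : IsMoorePenrose B Bdag)
    (lamMax : ℝ)
    (hlam : IsGreatest {μ : ℝ | ∃ v : Fin s → ℝ, v ≠ 0 ∧
      ((1 : Matrix (Fin s) (Fin s) ℝ) - (Adag * B) * (Bdag * A)).mulVec v = μ • v} lamMax) :
    lamMax = sSup {r : ℝ | ∃ u : Fin N → ℝ, u ∈ LinearMap.range A.mulVecLin ∧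
      (∑ i, (u i) ^ 2 = 1) ∧ r = ∑ i, ((u - B.mulVec (Bdag.mulVec u)) i) ^ 2} := by
  obtain ⟨hA1, hA2, hA3, hA4⟩ := hAdag
  obtain ⟨hB1, hB2, hB3, hB4⟩ := hBdag
  clear hA2 hA4 hB2 hB4 hBrank
  -- injectivity of A
  have hAinj : Function.Injective A.mulVecLin := by
    rw [← LinearMap.ker_eq_bot]
    have h := LinearMap.finrank_range_add_finrank_ker A.mulVecLin
    rw [Matrix.rank] at hArank
    have h2 : Module.finrank ℝ (Fin s → ℝ) = s := by simp
    exact Submodule.finrank_eq_zero.mp (by omega)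
  set Q : Matrix (Fin N) (Fin N) ℝ := 1 - B * Bdag with hQ
  set PA : Matrix (Fin N) (Fin N) ℝ := A * Adag with hPA
  set Mc : Matrix (Fin s) (Fin s) ℝ := 1 - (Adag * B) * (Bdag * A) with hMc
  -- note: `set` turned hA1 into `PA * A = A`, hA3 into `PAᵀ = PA`
  have hQT : Qᵀ = Q := by rw [hQ, transpose_sub, transpose_one, hB3]
  have hQQ : Q * Q = Q := by
    have h5 : (B * Bdag) * (B * Bdag) = B * Bdag := by
      rw [← Matrix.mul_assoc, hB1]
    rw [hQ, sub_mul, mul_sub, mul_sub, one_mul, mul_one, one_mul, h5]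
    abel
  have key : PA * Q * A = A * Mc := by
    have h6 : PA * (B * Bdag) * A = A * ((Adag * B) * (Bdag * A)) := by
      rw [hPA]; simp only [Matrix.mul_assoc]
    rw [hQ, hMc, mul_sub, mul_one, Matrix.sub_mul, Matrix.mul_sub, Matrix.mul_one, hA1, h6]
  have hATPA : Aᵀ * PA = Aᵀ :=
    calc Aᵀ * PA = Aᵀ * PAᵀ := by rw [hA3]
    _ = (PA * A)ᵀ := (transpose_mul PA A).symm
    _ = Aᵀ := by rw [hA1]
  -- the symmetric matrix W
  set W : Matrix (Fin s) (Fin s) ℝ := Aᵀ * Q * A with hW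
  have hW1 : Aᵀ * (PA * Q * A) = W := by
    rw [show Aᵀ * (PA * Q * A) = (Aᵀ * PA) * Q * A by simp only [Matrix.mul_assoc], hATPA, hW]
  have hW2 : (PA * Q * A)ᵀ * A = W := by
    have e1 : (PA * Q * A)ᵀ = Aᵀ * (Qᵀ * PAᵀ) := by
      rw [transpose_mul (PA * Q) A, transpose_mul PA Q]
    rw [e1, hQT, hA3]
    calc Aᵀ * (Q * PA) * A = Aᵀ * Q * (PA * A) := by simp only [Matrix.mul_assoc]
    _ = W := by rw [hA1, hW]
  have hW3 : Aᵀ * (Q * Q) * A = W := by rw [hQQ, hW]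
  have hQmul : ∀ u : Fin N → ℝ, Q *ᵥ u = u - B *ᵥ (Bdag *ᵥ u) := by
    intro u
    rw [hQ, sub_mulVec, one_mulVec, Matrix.mulVec_mulVec]
  -- the subspace
  set V : Submodule ℝ (EuclideanSpace ℝ (Fin N)) := LinearMap.range (toEuclideanLin A) with hV
  have hres : ∀ x ∈ V, toEuclideanLin (PA * Q) x ∈ V := by
    rintro x ⟨a, rfl⟩
    exact ⟨toEuclideanLin Mc a, by
      rw [toEuclideanLin_comp, toEuclideanLin_comp, ← key]⟩
  set T : V →ₗ[ℝ] V := (toEuclideanLin (PA * Q)).restrict hres with hT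
  have hTcoe : ∀ x : V, (T x : EuclideanSpace ℝ (Fin N)) = (PA * Q) *ᵥ (x : Fin N → ℝ) := by
    intro x; rfl
  -- rayleigh value on V
  have hval : ∀ a : Fin s → ℝ, ∀ u : Fin N → ℝ, A *ᵥ a = u →
      (((PA * Q) *ᵥ u) ⬝ᵥ u = a ⬝ᵥ (W *ᵥ a) ∧ (Q *ᵥ u) ⬝ᵥ (Q *ᵥ u) = a ⬝ᵥ (W *ᵥ a)) := by
    rintro a u rfl
    constructor
    · rw [Matrix.mulVec_mulVec, dot_shift, Matrix.mulVec_mulVec, hW2]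
    · have h7 : (Q * A)ᵀ * (Q * A) = W := by
        have e1 : (Q * A)ᵀ = Aᵀ * Qᵀ := transpose_mul Q A
        rw [e1, hQT]
        calc Aᵀ * Q * (Q * A) = Aᵀ * (Q * Q) * A := by simp only [Matrix.mul_assoc]
        _ = W := hW3
      rw [Matrix.mulVec_mulVec, dot_shift, Matrix.mulVec_mulVec, h7]
  have hsym : T.IsSymmetric := by
    rintro ⟨x, a, rfl⟩ ⟨y, b, rfl⟩
    rw [Submodule.coe_inner, Submodule.coe_inner]
    rw [inner_eq_dot, inner_eq_dot]
    show ((PA * Q) *ᵥ (A *ᵥ a.ofLp)) ⬝ᵥ (A *ᵥ b.ofLp) = (A *ᵥ a.ofLp) ⬝ᵥ ((PA * Q) *ᵥ (A *ᵥ b.ofLp))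
    rw [Matrix.mulVec_mulVec, Matrix.mulVec_mulVec, dot_shift, dot_shift]
    rw [Matrix.mulVec_mulVec, Matrix.mulVec_mulVec, hW2, hW1]
  -- nontriviality of V
  obtain ⟨v, hv0, hveig⟩ := hlam.1
  have hAv0 : A *ᵥ v ≠ 0 := by
    intro h
    exact hv0 (by simpa using hAinj (show A.mulVecLin v = A.mulVecLin 0 by
      simpa [Matrix.mulVecLin_apply] using h))
  haveI : Nontrivial V := by
    refine nontrivial_of_ne ⟨WithLp.toLp 2 (A *ᵥ v), ⟨WithLp.toLp 2 v, rfl⟩⟩ 0 ?_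
    intro h
    exact hAv0 (congrArg (fun y => WithLp.ofLp (Subtype.val y)) h)
  -- the supremum of the Rayleigh quotient of T is an eigenvalue and is ≤ lamMax
  have heig := hsym.hasEigenvalue_iSup_of_finiteDimensional
  set μs : ℝ := ⨆ x : {x : ↥V // x ≠ 0},
      RCLike.re ⟪T ↑x, (↑x : ↥V)⟫ / ‖(↑x : ↥V)‖ ^ 2 with hμs
  have heig' : Module.End.HasEigenvalue T μs := heig
  have hμs_le : μs ≤ lamMax := by
    obtain ⟨w, hw⟩ := heig'.exists_hasEigenvector
    have hweq : T w = μs • w := hw.apply_eq_smul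
    have hwc : (PA * Q) *ᵥ (w : Fin N → ℝ) = μs • (w : Fin N → ℝ) := by
      have := congrArg WithLp.ofLp (congrArg Subtype.val hweq)
      rw [hTcoe] at this
      exact this
    obtain ⟨b, hb⟩ := w.2
    have hb' : A *ᵥ b = (w : Fin N → ℝ) := congrArg WithLp.ofLp hb
    have hb0 : b ≠ 0 := by
      rintro rfl
      apply hw.2
      have : (w : Fin N → ℝ) = 0 := by rw [← hb']; simp [Matrix.mulVec_zero]
      exact Subtype.ext (congrArg (WithLp.toLp 2) this)
    refine hlam.2 ⟨b, fun h => hb0 (congrArg (WithLp.toLp 2) h), ?_⟩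
    apply hAinj
    show A *ᵥ (Mc *ᵥ b) = A *ᵥ (μs • b)
    calc A *ᵥ (Mc *ᵥ b) = (A * Mc) *ᵥ b := by simp only [Matrix.mulVec_mulVec]
    _ = (PA * Q * A) *ᵥ b := by rw [key]
    _ = (PA * Q) *ᵥ (A *ᵥ b) := by simp only [Matrix.mulVec_mulVec]
    _ = μs • (A *ᵥ b) := by rw [hb']; exact hwc
    _ = A *ᵥ (μs • b) := (Matrix.mulVec_smul A μs b).symm
  -- IsGreatest of the RHS set
  have hG : IsGreatest {r : ℝ | ∃ u : Fin N → ℝ, u ∈ LinearMap.range A.mulVecLin ∧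
      (∑ i, (u i) ^ 2 = 1) ∧ r = ∑ i, ((u - B.mulVec (Bdag.mulVec u)) i) ^ 2} lamMax := by
    constructor
    · -- lamMax is attained
      set n2 : ℝ := (A *ᵥ v) ⬝ᵥ (A *ᵥ v) with hn2
      have hn2nonneg : 0 ≤ n2 := by
        rw [hn2, ← sum_sq_eq_dot]
        exact Finset.sum_nonneg fun i _ => sq_nonneg _
      have hn2pos : 0 < n2 := by
        rcases lt_or_eq_of_le hn2nonneg with h | h
        · exact h
        · exact absurd (dotProduct_self_eq_zero.mp h.symm) hAv0
      set c : ℝ := (Real.sqrt n2)⁻¹ with hc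
      have hcc : c * c * n2 = 1 := by
        rw [hc, ← mul_inv, Real.mul_self_sqrt hn2nonneg]
        field_simp
      refine ⟨c • (A *ᵥ v), ⟨c • v, by simp [Matrix.mulVecLin_apply, Matrix.mulVec_smul]⟩, ?_, ?_⟩
      · rw [sum_sq_eq_dot, smul_dotProduct, dotProduct_smul, ← hn2, smul_eq_mul, smul_eq_mul,
          ← mul_assoc]
        exact hcc
      · rw [← hQmul, sum_sq_eq_dot, Matrix.mulVec_smul, smul_dotProduct, dotProduct_smul]
        have h8 := (hval v (A *ᵥ v) rfl).2
        have hWv : W *ᵥ v = lamMax • (Aᵀ *ᵥ (A *ᵥ v)) := by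
          have e : W *ᵥ v = Aᵀ *ᵥ (A *ᵥ (Mc *ᵥ v)) := by
            rw [← hW1, key]
            simp only [Matrix.mulVec_mulVec]
          rw [e, hveig, Matrix.mulVec_smul, Matrix.mulVec_smul]
        have h9 : v ⬝ᵥ (W *ᵥ v) = lamMax * n2 := by
          rw [hWv, dotProduct_smul, smul_eq_mul, hn2, dot_shift]
        rw [h8, h9, smul_eq_mul, smul_eq_mul]
        linear_combination (-lamMax) * hcc
    · -- upper bound
      rintro r ⟨u, humem, hunorm, hr⟩
      obtain ⟨a, ha⟩ := humem
      have ha' : A *ᵥ a = u := ha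
      have hu0 : u ≠ 0 := by
        rintro rfl
        simp at hunorm
      set x : V := ⟨WithLp.toLp 2 u, ⟨WithLp.toLp 2 a, congrArg (WithLp.toLp 2) ha⟩⟩ with hx
      have hx0 : x ≠ 0 := fun h => hu0 (congrArg (fun y => WithLp.ofLp (Subtype.val y)) h)
      have hnx : ‖x‖ ^ 2 = 1 := by
        rw [← real_inner_self_eq_norm_sq, Submodule.coe_inner, inner_eq_dot, ← sum_sq_eq_dot]
        exact hunorm
      have hTxx : ⟪T x, x⟫ = r := by
        rw [Submodule.coe_inner, inner_eq_dot]
        have h10 := (hval a u ha').1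
        have h11 := (hval a u ha').2
        rw [hr, ← hQmul, sum_sq_eq_dot, h11]
        exact h10
      have hrle : r ≤ μs := by
        have hbdd : BddAbove (Set.range fun z : {x : ↥V // x ≠ 0} =>
            RCLike.re ⟪T ↑z, (↑z : ↥V)⟫ / ‖(↑z : ↥V)‖ ^ 2) := by
          set T' := LinearMap.toContinuousLinearMap T with hT'
          refine ⟨‖T'‖, ?_⟩
          rintro _ ⟨⟨z, hz0⟩, rfl⟩
          have hz2 : (0:ℝ) < ‖z‖ ^ 2 := by
            have : ‖z‖ ≠ 0 := norm_ne_zero_iff.mpr hz0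
            positivity
          have h1 : ⟪T z, z⟫ ≤ ‖T'‖ * ‖z‖ ^ 2 := by
            calc ⟪T z, z⟫ ≤ ‖T z‖ * ‖z‖ := real_inner_le_norm _ _
            _ = ‖T' z‖ * ‖z‖ := rfl
            _ ≤ (‖T'‖ * ‖z‖) * ‖z‖ :=
                mul_le_mul_of_nonneg_right (T'.le_opNorm z) (norm_nonneg _)
            _ = ‖T'‖ * ‖z‖ ^ 2 := by ring
          show RCLike.re ⟪T z, z⟫ / ‖z‖ ^ 2 ≤ ‖T'‖
          rw [RCLike.re_to_real, div_le_iff₀ hz2]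
          linarith [h1]
        have hle := le_ciSup hbdd (⟨x, hx0⟩ : {x : ↥V // x ≠ 0})
        rw [← hμs] at hle
        have hfeq : RCLike.re ⟪T x, x⟫ / ‖x‖ ^ 2 = r := by
          rw [RCLike.re_to_real, hTxx, hnx, div_one]
        rw [← hfeq]
        exact hle
      exact le_trans hrle hμs_le
  exact (hG.csSup_eq).symm
end

section
/- Let H be a real inner product space, let u_1,…,u_s and v_1,…,v_s be orthonormal families in H, and let σ_1,…,σ_s ∈ [0,1] satisfy ⟨u_i, v_j⟩ = δ_ij σ_i for all i, j. Let V = span(v_1,…,v_s), let V' ⊂ V be a subspace with dim V' = s − 1, let ω ∈ V be a unit vector orthogonal to V', and write d_i = ⟨ω, v_i⟩. Define the symmetric matrix Ñ_1 ∈ ℝ^{(s−1)×(s−1)} by (Ñ_1)_{αβ} = (1 − σ_α²) δ_{αβ} + σ_α d_α σ_β d_β. Then sup { ‖f − P_{V'} f‖² : f ∈ span(u_1,…,u_{s−1}), ‖f‖ = 1 } equals the largest eigenvalue of Ñ_1. -/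
open scoped RealInnerProductSpace Matrix

section Aux

variable {H : Type*} [NormedAddCommGroup H] [InnerProductSpace ℝ H]

/-- Inner products vanishing on generators vanish on the span. -/
lemma aux_inner_span_zero {S : Set H} {x : H} (h : ∀ y ∈ S, ⟪x, y⟫ = 0) :
    ∀ y ∈ Submodule.span ℝ S, ⟪x, y⟫ = 0 := by
  intro y hy
  induction hy using Submodule.span_induction with
  | mem z hz => exact h z hz
  | zero => simp
  | add a b _ _ ha hb => simp [inner_add_right, ha, hb]
  | smul r a _ ha => simp [inner_smul_right, ha]

/-- Rayleigh-quotient upper bound for a real symmetric matrix. -/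
lemma aux_rayleigh_bound {t : ℕ} (M : Matrix (Fin t) (Fin t) ℝ) (hM : M.IsHermitian)
    (lam : ℝ) (hub : ∀ μ : ℝ, (∃ z : Fin t → ℝ, z ≠ 0 ∧ M.mulVec z = μ • z) → μ ≤ lam)
    (c : Fin t → ℝ) (hc : ∑ i, c i ^ 2 = 1) :
    c ⬝ᵥ M.mulVec c ≤ lam := by
  classical
  set b := hM.eigenvectorBasis with hb
  set lamb := hM.eigenvalues with hlamb
  set T := Matrix.toEuclideanLin M with hT
  have hsym : T.IsSymmetric := (Matrix.isHermitian_iff_isSymmetric).1 hM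
  have hTapp : ∀ x : EuclideanSpace ℝ (Fin t), T x = M.mulVec x := fun x => rfl
  have hTB : ∀ i, T (b i) = lamb i • b i := fun i => by
    have := congrArg (WithLp.toLp 2) (hM.mulVec_eigenvectorBasis i); exact this
  have hlb : ∀ i, lamb i ≤ lam := fun i =>
    hub _ ⟨b i, (WithLp.ofLp_eq_zero 2).ne.2 (b.orthonormal.ne_zero i), hM.mulVec_eigenvectorBasis i⟩
  set c' : EuclideanSpace ℝ (Fin t) := WithLp.toLp 2 c with hc'
  have inner_formula : ∀ x y : EuclideanSpace ℝ (Fin t),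
      ⟪x, y⟫ = ∑ i, b.repr x i * b.repr y i := by
    intro x y
    have h := b.repr.inner_map_map x y
    rw [PiLp.inner_apply, PiLp.inner_apply] at h
    rw [PiLp.inner_apply]
    simpa [RCLike.inner_apply, mul_comm] using h.symm
  have hr2 : ∑ i, (b.repr c' i) ^ 2 = 1 := by
    have h1 : ⟪c', c'⟫ = 1 := by
      have : ⟪c', c'⟫ = ∑ i, c i * c i := by
        rw [hc', PiLp.inner_apply]; simp [RCLike.inner_apply, pow_two]
      rw [this]
      simpa [pow_two] using hc
    rw [inner_formula c' c'] at h1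
    simpa [pow_two] using h1
  have hrT : ∀ i, b.repr (T c') i = lamb i * b.repr c' i := by
    intro i
    rw [b.repr_apply_apply, ← hsym (b i) c', hTB i, real_inner_smul_left,
      ← b.repr_apply_apply]
  have hQ : c ⬝ᵥ M.mulVec c = ∑ i, lamb i * (b.repr c' i) ^ 2 := by
    have h0 : c ⬝ᵥ M.mulVec c = ⟪c', T c'⟫ := by
      rw [PiLp.inner_apply]
      simp only [hc', RCLike.inner_apply, conj_trivial]
      rw [dotProduct]
      exact Finset.sum_congr rfl fun i _ => mul_comm _ _
    rw [h0, inner_formula]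
    exact Finset.sum_congr rfl fun i _ => by rw [hrT i]; ring
  rw [hQ]
  calc ∑ i, lamb i * (b.repr c' i) ^ 2
      ≤ ∑ i, lam * (b.repr c' i) ^ 2 :=
        Finset.sum_le_sum fun i _ => mul_le_mul_of_nonneg_right (hlb i) (sq_nonneg _)
    _ = lam := by rw [← Finset.mul_sum, hr2, mul_one]

end Aux

/-- In the setting of principal vectors `u₁,…,u_s`, `v₁,…,v_s`
(orthonormal with `⟨uᵢ, vⱼ⟩ = δ_ij σᵢ`, `σᵢ ∈ [0,1]`), with `V = span(v₁,…,v_s)`,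
`V' ⊂ V` of dimension `s − 1`, `ω ∈ V` a unit vector orthogonal to `V'`, `dᵢ = ⟨ω, vᵢ⟩`,
and `Ñ₁ ∈ ℝ^{(s−1)×(s−1)}` given by `(Ñ₁)_{αβ} = (1 − σ_α²) δ_{αβ} + σ_α d_α σ_β d_β`:
`sup { ‖f − P_{V'} f‖² : f ∈ span(u₁,…,u_{s−1}), ‖f‖ = 1 }` equals the largest eigenvalue
of `Ñ₁`. -/
theorem stmt_12 {H : Type*} [NormedAddCommGroup H] [InnerProductSpace ℝ H] {s : ℕ}
    (u v : Fin s → H) (hu : Orthonormal ℝ u) (hv : Orthonormal ℝ v)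
    (σ : Fin s → ℝ) (hσ : ∀ i, σ i ∈ Set.Icc (0 : ℝ) 1)
    (huv : ∀ i j, ⟪u i, v j⟫ = if i = j then σ i else 0)
    (V V' : Submodule ℝ H)
    (hV : V = Submodule.span ℝ (Set.range v))
    (hV'le : V' ≤ V) [FiniteDimensional ℝ V']
    (hV'dim : Module.finrank ℝ V' = s - 1)
    (ω : H) (hωV : ω ∈ V) (hωnorm : ‖ω‖ = 1)
    (hωperp : ∀ x ∈ V', ⟪ω, x⟫ = 0)
    (d : Fin s → ℝ) (hd : ∀ i, d i = ⟪ω, v i⟫)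
    (N₁ : Matrix (Fin (s - 1)) (Fin (s - 1)) ℝ)
    (hN₁ : ∀ α β, N₁ α β
      = (if α = β then 1 - σ (Fin.castLE (Nat.sub_le s 1) α) ^ 2 else 0)
        + σ (Fin.castLE (Nat.sub_le s 1) α) * d (Fin.castLE (Nat.sub_le s 1) α)
          * (σ (Fin.castLE (Nat.sub_le s 1) β) * d (Fin.castLE (Nat.sub_le s 1) β)))
    (lamMax : ℝ)
    (hlam : IsGreatest {μ : ℝ | ∃ z : Fin (s - 1) → ℝ, z ≠ 0 ∧ N₁.mulVec z = μ • z} lamMax) :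
    sSup {r : ℝ | ∃ f ∈ Submodule.span ℝ
          (Set.range fun α : Fin (s - 1) => u (Fin.castLE (Nat.sub_le s 1) α)),
        ‖f‖ = 1 ∧ r = ‖f - (V'.orthogonalProjectionOnto f : H)‖ ^ 2}
      = lamMax := by
  classical
  obtain ⟨⟨z, hz0, hz⟩, hub'⟩ := hlam
  have hub : ∀ μ : ℝ, (∃ z : Fin (s - 1) → ℝ, z ≠ 0 ∧ N₁.mulVec z = μ • z) → μ ≤ lamMax :=
    fun μ hμ => hub' hμ
  set e : Fin (s - 1) → Fin s := Fin.castLE (Nat.sub_le s 1) with he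
  have hei : Function.Injective e := Fin.castLE_injective _
  haveI : FiniteDimensional ℝ V := by
    rw [hV]; exact FiniteDimensional.span_of_finite ℝ (Set.finite_range v)
  have hVmem : ∀ j, v j ∈ V := fun j => hV ▸ Submodule.subset_span ⟨j, rfl⟩
  have hvv : ∀ i j, ⟪v i, v j⟫ = if i = j then (1 : ℝ) else 0 := orthonormal_iff_ite.mp hv
  have huu : ∀ i j, ⟪u i, u j⟫ = if i = j then (1 : ℝ) else 0 := orthonormal_iff_ite.mp hu
  -- ⟪u i, ω⟫ = σ i * d i
  have hωd : ∀ i, ⟪u i, ω⟫ = σ i * d i := by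
    intro i
    have h1 : ∀ y ∈ V, ⟪u i - σ i • v i, y⟫ = 0 := by
      rw [hV]
      apply aux_inner_span_zero
      rintro y ⟨j, rfl⟩
      rw [inner_sub_left, real_inner_smul_left, huv, hvv]
      by_cases h : i = j <;> simp [h]
    have h2 := h1 ω hωV
    rw [inner_sub_left, real_inner_smul_left] at h2
    have h3 : ⟪v i, ω⟫ = d i := by rw [hd i, real_inner_comm]
    rw [h3] at h2
    linarith
  -- the dimension argument : V' = V ⊓ (ℝ ∙ ω)ᗮ
  have hdimV : Module.finrank ℝ V = s := by
    rw [hV, finrank_span_eq_card hv.linearIndependent, Fintype.card_fin]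
  have hωω : ⟪ω, ω⟫ = 1 := by
    rw [real_inner_self_eq_norm_sq, hωnorm]; norm_num
  have hV'eq : V' = V ⊓ (Submodule.span ℝ {ω})ᗮ := by
    have hle : V' ≤ V ⊓ (Submodule.span ℝ {ω})ᗮ := by
      refine le_inf hV'le fun x hx => ?_
      exact Submodule.mem_orthogonal_singleton_iff_inner_right.2 (hωperp x hx)
    haveI : FiniteDimensional ℝ (V ⊓ (Submodule.span ℝ {ω})ᗮ : Submodule ℝ H) :=
      Submodule.finiteDimensional_of_le (inf_le_left)
    have hlt : (V ⊓ (Submodule.span ℝ {ω})ᗮ : Submodule ℝ H) < V := by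
      refine lt_of_le_of_ne inf_le_left fun hEq => ?_
      have : ω ∈ V ⊓ (Submodule.span ℝ {ω})ᗮ := hEq.symm ▸ hωV
      have := Submodule.mem_orthogonal_singleton_iff_inner_right.1 this.2
      rw [hωω] at this; norm_num at this
    have hfr : Module.finrank ℝ (V ⊓ (Submodule.span ℝ {ω})ᗮ : Submodule ℝ H)
        < Module.finrank ℝ V := Submodule.finrank_lt_finrank_of_lt hlt
    refine (Submodule.eq_of_le_of_finrank_le hle ?_)
    rw [hV'dim]; omega
  -- orthonormality of restricted families
  have huu' : ∀ α β : Fin (s - 1), ⟪u (e α), u (e β)⟫ = if α = β then (1 : ℝ) else 0 := by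
    intro α β; rw [huu]; simp [hei.eq_iff]
  have hvv' : ∀ α β : Fin (s - 1), ⟪v (e α), v (e β)⟫ = if α = β then (1 : ℝ) else 0 := by
    intro α β; rw [hvv]; simp [hei.eq_iff]
  -- the key norm computation
  have key : ∀ c : Fin (s - 1) → ℝ,
      ‖(∑ α, c α • u (e α)) - (V'.orthogonalProjectionOnto (∑ α, c α • u (e α)) : H)‖ ^ 2
        = ((∑ α, c α ^ 2) - ∑ α, σ (e α) ^ 2 * c α ^ 2)
          + (∑ α, σ (e α) * d (e α) * c α) ^ 2 := by
    intro c
    set f : H := ∑ α, c α • u (e α) with hf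
    set g : H := ∑ α, (σ (e α) * c α) • v (e α) with hg
    set S : ℝ := ∑ α, σ (e α) * d (e α) * c α with hS
    have hfg_perp : ∀ y ∈ V, ⟪f - g, y⟫ = 0 := by
      rw [hV]
      apply aux_inner_span_zero
      rintro y ⟨k, rfl⟩
      rw [inner_sub_left, sub_eq_zero, hf, hg, sum_inner, sum_inner]
      refine Finset.sum_congr rfl fun α _ => ?_
      rw [real_inner_smul_left, real_inner_smul_left, huv, hvv]
      by_cases h : e α = k
      · subst h; simp [mul_comm]
      · simp [h]
    have hωf : ⟪f, ω⟫ = S := by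
      rw [hf, hS, sum_inner]
      refine Finset.sum_congr rfl fun α _ => ?_
      rw [real_inner_smul_left, hωd]; ring
    have hωg : ⟪ω, g⟫ = S := by
      rw [hg, hS, inner_sum]
      refine Finset.sum_congr rfl fun α _ => ?_
      rw [real_inner_smul_right, ← hd]; ring
    have hPV' : (V'.orthogonalProjectionOnto f : H) = g - S • ω := by
      apply Submodule.eq_starProjection_of_mem_of_inner_eq_zero (K := V')
      · rw [hV'eq]
        refine Submodule.mem_inf.2 ⟨?_, ?_⟩
        · exact sub_mem (Submodule.sum_mem _ fun α _ => Submodule.smul_mem _ _ (hVmem (e α)))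
            (Submodule.smul_mem _ _ hωV)
        · refine Submodule.mem_orthogonal_singleton_iff_inner_right.2 ?_
          rw [inner_sub_right, real_inner_smul_right, hωg, hωω]; ring
      · intro x hx
        have hsplit : f - (g - S • ω) = (f - g) + S • ω := by abel
        rw [hsplit, inner_add_left, hfg_perp x (hV'le hx), real_inner_smul_left,
          hωperp x hx]
        ring
    have hsplit : f - (V'.orthogonalProjectionOnto f : H) = (f - g) + S • ω := by
      rw [hPV']; abel
    have h1 : ⟪f - g, S • ω⟫ = 0 := by
      rw [real_inner_smul_right, hfg_perp ω hωV]; ring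
    have hf2 : ‖f‖ ^ 2 = ∑ α, c α ^ 2 := by
      rw [← real_inner_self_eq_norm_sq, hf, sum_inner]
      refine Finset.sum_congr rfl fun α _ => ?_
      rw [real_inner_smul_left, inner_sum]
      simp only [real_inner_smul_right, huu']
      rw [Finset.sum_eq_single α]
      · simp [pow_two]
      · intro b _ hb; simp [Ne.symm hb]
      · intro hb; exact absurd (Finset.mem_univ α) hb
    have hg2 : ‖g‖ ^ 2 = ∑ α, σ (e α) ^ 2 * c α ^ 2 := by
      rw [← real_inner_self_eq_norm_sq, hg, sum_inner]
      refine Finset.sum_congr rfl fun α _ => ?_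
      rw [real_inner_smul_left, inner_sum]
      simp only [real_inner_smul_right, hvv']
      rw [Finset.sum_eq_single α]
      · simp [pow_two]; ring
      · intro b _ hb; simp [Ne.symm hb]
      · intro hb; exact absurd (Finset.mem_univ α) hb
    have hfg : ⟪f, g⟫ = ∑ α, σ (e α) ^ 2 * c α ^ 2 := by
      rw [hf, hg, sum_inner]
      refine Finset.sum_congr rfl fun α _ => ?_
      rw [real_inner_smul_left, inner_sum]
      simp only [real_inner_smul_right, huv]
      rw [Finset.sum_eq_single α]
      · simp [hei.eq_iff, pow_two]; ring
      · intro b _ hb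
        have : ¬ (e α = e b) := fun h => hb (hei h).symm
        simp [this]
      · intro hb; exact absurd (Finset.mem_univ α) hb
    rw [hsplit, norm_add_sq_real, h1, norm_sub_sq_real, hf2, hg2, hfg, norm_smul,
      hωnorm, Real.norm_eq_abs]
    rw [mul_one, sq_abs]
    ring
  -- the quadratic form of N₁
  have hQform : ∀ c : Fin (s - 1) → ℝ,
      c ⬝ᵥ N₁.mulVec c
        = ((∑ α, c α ^ 2) - ∑ α, σ (e α) ^ 2 * c α ^ 2)
          + (∑ α, σ (e α) * d (e α) * c α) ^ 2 := by
    intro c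
    have hmv : ∀ α, N₁.mulVec c α
        = (1 - σ (e α) ^ 2) * c α + σ (e α) * d (e α) * ∑ β, σ (e β) * d (e β) * c β := by
      intro α
      rw [Matrix.mulVec, dotProduct]
      simp only [hN₁, ← he, add_mul]
      rw [Finset.sum_add_distrib]
      congr 1
      · rw [Finset.sum_eq_single α]
        · simp
        · intro b _ hb; simp [Ne.symm hb]
        · intro hb; exact absurd (Finset.mem_univ α) hb
      · rw [Finset.mul_sum]
        refine Finset.sum_congr rfl fun β _ => by ring
    rw [dotProduct]
    have : ∑ α, c α * N₁.mulVec c α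
        = ∑ α, ((1 - σ (e α) ^ 2) * c α ^ 2
            + (σ (e α) * d (e α) * c α) * ∑ β, σ (e β) * d (e β) * c β) := by
      refine Finset.sum_congr rfl fun α _ => ?_
      rw [hmv α]; ring
    rw [this, Finset.sum_add_distrib, ← Finset.sum_mul, ← pow_two]
    rw [← Finset.sum_sub_distrib]
    congr 1
    refine Finset.sum_congr rfl fun α _ => by ring
  -- N₁ is symmetric
  have hHerm : N₁.IsHermitian := by
    rw [Matrix.IsHermitian]
    ext α β
    rw [Matrix.conjTranspose_apply, hN₁, hN₁]
    rcases eq_or_ne α β with rfl | hne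
    · simp
    · simp [hne, Ne.symm hne]
      ring
  -- degenerate case
  rcases Nat.eq_zero_or_pos (s - 1) with hs0 | hspos
  · exfalso
    exact hz0 (funext fun i => absurd i.isLt (by omega))
  -- unit norms correspond to sum of squares one
  have hnorm_sq : ∀ c : Fin (s - 1) → ℝ, ‖∑ α, c α • u (e α)‖ ^ 2 = ∑ α, c α ^ 2 := by
    intro c
    rw [← real_inner_self_eq_norm_sq, sum_inner]
    refine Finset.sum_congr rfl fun α _ => ?_
    rw [real_inner_smul_left, inner_sum]
    simp only [real_inner_smul_right, huu']
    rw [Finset.sum_eq_single α]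
    · simp [pow_two]
    · intro b _ hb; simp [Ne.symm hb]
    · intro hb; exact absurd (Finset.mem_univ α) hb
  -- Now prove the sSup identity via IsGreatest
  refine IsGreatest.csSup_eq ⟨?_, ?_⟩
  · -- lamMax is attained
    set n : ℝ := Real.sqrt (∑ i, z i ^ 2) with hn
    have hsum_pos : 0 < ∑ i, z i ^ 2 := by
      obtain ⟨i, hi⟩ := Function.ne_iff.1 hz0
      refine Finset.sum_pos' (fun j _ => sq_nonneg _) ⟨i, Finset.mem_univ i, ?_⟩
      exact (sq_nonneg (z i)).lt_of_ne' (pow_ne_zero 2 hi)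
    have hnpos : 0 < n := Real.sqrt_pos.2 hsum_pos
    set c : Fin (s - 1) → ℝ := fun i => n⁻¹ * z i with hc
    have hc1 : ∑ α, c α ^ 2 = 1 := by
      have h2 : n ^ 2 = ∑ i, z i ^ 2 := by rw [hn]; exact Real.sq_sqrt hsum_pos.le
      simp only [hc, mul_pow, ← Finset.mul_sum]
      rw [← h2, inv_pow]
      exact inv_mul_cancel₀ (pow_ne_zero 2 hnpos.ne')
    refine ⟨∑ α, c α • u (e α), ?_, ?_, ?_⟩
    · exact (Submodule.mem_span_range_iff_exists_fun ℝ).2 ⟨c, rfl⟩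
    · have := hnorm_sq c
      rw [hc1] at this
      nlinarith [norm_nonneg (∑ α, c α • u (e α))]
    · rw [key c, ← hQform c]
      have hcz : c = n⁻¹ • z := by funext i; simp [hc]
      have hmc : N₁.mulVec c = lamMax • c := by
        rw [hcz, Matrix.mulVec_smul, hz, smul_comm]
      rw [hmc, dotProduct_smul]
      have : c ⬝ᵥ c = ∑ α, c α ^ 2 := by
        rw [dotProduct]
        exact Finset.sum_congr rfl fun α _ => (pow_two _).symm
      rw [smul_eq_mul, this, hc1, mul_one]
  · -- upper bound
    rintro r ⟨f, hfmem, hfnorm, rfl⟩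
    obtain ⟨c, hcf⟩ := (Submodule.mem_span_range_iff_exists_fun ℝ).1 hfmem
    have hcf' : ∑ α, c α • u (e α) = f := hcf
    have hc1 : ∑ α, c α ^ 2 = 1 := by
      rw [← hnorm_sq c, hcf', hfnorm]; norm_num
    rw [← hcf', key c, ← hQform c]
    exact aux_rayleigh_bound N₁ hHerm lamMax hub c hc1
end

section
/- Let H be a real inner product space, let u_1,…,u_s and v_1,…,v_s be orthonormal families in H, and let σ_1,…,σ_s ∈ [0,1] satisfy ⟨u_i, v_j⟩ = δ_ij σ_i for all i, j. Let V = span(v_1,…,v_s), let V' ⊂ V be a subspace with dim V' = s − 1, let ω ∈ V be a unit vector orthogonal to V', and write d_i = ⟨ω, v_i⟩. Let Ñ_1 ∈ ℝ^{(s−1)×(s−1)} be defined by (Ñ_1)_{αβ} = (1 − σ_α²) δ_{αβ} + σ_α d_α σ_β d_β. If z ∈ ℝ^{s−1} is a unit eigenvector of Ñ_1 with eigenvalue λ, then f := Σ_{α=1}^{s−1} z_α u_α is a unit vector in span(u_1,…,u_{s−1}) satisfying ‖P_{V'} f‖² = 1 − λ and ‖f − P_{V'} f‖² = λ. -/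
open scoped RealInnerProductSpace

/-- In the setting of principal vectors `u₁,…,u_s`, `v₁,…,v_s`
(orthonormal with `⟨uᵢ, vⱼ⟩ = δ_ij σᵢ`, `σᵢ ∈ [0,1]`), with `V = span(v₁,…,v_s)`,
`V' ⊂ V` of dimension `s − 1`, `ω ∈ V` a unit vector orthogonal to `V'`, `dᵢ = ⟨ω, vᵢ⟩`,
and `Ñ₁` given by `(Ñ₁)_{αβ} = (1 − σ_α²) δ_{αβ} + σ_α d_α σ_β d_β`: if `z ∈ ℝ^{s−1}` is a
unit eigenvector of `Ñ₁` with eigenvalue `λ`, then `f = Σ_α z_α u_α` is a unit vector in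
`span(u₁,…,u_{s−1})` with `‖P_{V'} f‖² = 1 − λ` and `‖f − P_{V'} f‖² = λ`. -/
theorem stmt_13 {H : Type*} [NormedAddCommGroup H] [InnerProductSpace ℝ H] {s : ℕ}
    (u v : Fin s → H) (hu : Orthonormal ℝ u) (hv : Orthonormal ℝ v)
    (σ : Fin s → ℝ) (hσ : ∀ i, σ i ∈ Set.Icc (0 : ℝ) 1)
    (huv : ∀ i j, ⟪u i, v j⟫ = if i = j then σ i else 0)
    (V V' : Submodule ℝ H)
    (hV : V = Submodule.span ℝ (Set.range v))
    (hV'le : V' ≤ V) [FiniteDimensional ℝ V']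
    (hV'dim : Module.finrank ℝ V' = s - 1)
    (ω : H) (hωV : ω ∈ V) (hωnorm : ‖ω‖ = 1)
    (hωperp : ∀ x ∈ V', ⟪ω, x⟫ = 0)
    (d : Fin s → ℝ) (hd : ∀ i, d i = ⟪ω, v i⟫)
    (N₁ : Matrix (Fin (s - 1)) (Fin (s - 1)) ℝ)
    (hN₁ : ∀ α β, N₁ α β
      = (if α = β then 1 - σ (Fin.castLE (Nat.sub_le s 1) α) ^ 2 else 0)
        + σ (Fin.castLE (Nat.sub_le s 1) α) * d (Fin.castLE (Nat.sub_le s 1) α)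
          * (σ (Fin.castLE (Nat.sub_le s 1) β) * d (Fin.castLE (Nat.sub_le s 1) β)))
    (z : Fin (s - 1) → ℝ) (lam : ℝ)
    (hznorm : ∑ α, z α ^ 2 = 1)
    (heig : N₁.mulVec z = lam • z) :
    -- f = Σ_α z_α u_α
    let f : H := ∑ α : Fin (s - 1), z α • u (Fin.castLE (Nat.sub_le s 1) α)
    f ∈ Submodule.span ℝ
        (Set.range fun α : Fin (s - 1) => u (Fin.castLE (Nat.sub_le s 1) α)) ∧
    ‖f‖ = 1 ∧
    ‖(V'.orthogonalProjection f : H)‖ ^ 2 = 1 - lam ∧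
    ‖f - (V'.orthogonalProjection f : H)‖ ^ 2 = lam := by
  classical
  set e : Fin (s - 1) → Fin s := Fin.castLE (Nat.sub_le s 1) with he
  have hei : Function.Injective e := Fin.castLE_injective _
  have hue : Orthonormal ℝ (u ∘ e) := hu.comp e hei
  have hve : Orthonormal ℝ (v ∘ e) := hv.comp e hei
  have hs1 : 1 ≤ s := by
    by_contra h
    push_neg at h
    interval_cases s
    simp at hznorm
  have hωne : ω ≠ 0 := by
    intro h
    rw [h, norm_zero] at hωnorm
    norm_num at hωnorm
  haveI : FiniteDimensional ℝ V := by
    rw [hV]; exact FiniteDimensional.span_of_finite ℝ (Set.finite_range v)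
  -- abbreviations
  set F : H := ∑ α : Fin (s - 1), z α • u (e α) with hF
  set c : ℝ := ∑ α : Fin (s - 1), σ (e α) * d (e α) * z α with hc
  set g : H := ∑ α : Fin (s - 1), (σ (e α) * z α) • v (e α) with hg
  set p : H := g - c • ω with hp
  have hvV : ∀ i, v i ∈ V := fun i => hV ▸ Submodule.subset_span ⟨i, rfl⟩
  have hgV : g ∈ V := Submodule.sum_mem _ fun α _ => Submodule.smul_mem _ _ (hvV _)
  have hvite := orthonormal_iff_ite.mp hv
  -- f - g is orthogonal to V
  have hvfg : ∀ i, ⟪v i, F - g⟫ = 0 := by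
    intro i
    rw [inner_sub_right, hF, hg, inner_sum, inner_sum]
    rw [← Finset.sum_sub_distrib]
    apply Finset.sum_eq_zero
    intro α _
    rw [real_inner_smul_right, real_inner_smul_right,
      real_inner_comm (u (e α)) (v i), huv, hvite]
    by_cases h : e α = i
    · subst h; simp; ring
    · rw [if_neg h, if_neg (fun hh => h hh.symm)]; ring
  have horth : ∀ x ∈ V, ⟪x, F - g⟫ = 0 := by
    intro x hx
    rw [hV] at hx
    induction hx using Submodule.span_induction with
    | mem x hx => obtain ⟨i, rfl⟩ := hx; exact hvfg i
    | zero => simp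
    | add x y _ _ hx hy => rw [inner_add_left, hx, hy, add_zero]
    | smul t x _ hx => rw [real_inner_smul_left, hx, mul_zero]
  have hωω : ⟪ω, ω⟫ = 1 := by rw [real_inner_self_eq_norm_sq, hωnorm]; norm_num
  have hωg : ⟪ω, g⟫ = c := by
    rw [hg, inner_sum, hc]
    apply Finset.sum_congr rfl
    intro α _
    rw [real_inner_smul_right, ← hd]
    ring
  have hωp : ⟪ω, p⟫ = 0 := by
    rw [hp, inner_sub_right, real_inner_smul_right, hωg, hωω]; ring
  -- V' ⊔ span ω = V
  have hω'span : (Submodule.span ℝ {ω} : Submodule ℝ H) ≤ V :=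
    Submodule.span_le.mpr (Set.singleton_subset_iff.mpr hωV)
  have hdisj : V' ⊓ (Submodule.span ℝ {ω}) = ⊥ := by
    rw [Submodule.eq_bot_iff]
    rintro x hx
    obtain ⟨hx1, hx2⟩ := Submodule.mem_inf.mp hx
    obtain ⟨t, rfl⟩ := Submodule.mem_span_singleton.mp hx2
    have h0 := hωperp _ hx1
    rw [real_inner_smul_right, hωω, mul_one] at h0
    rw [h0, zero_smul]
  have hVdim : Module.finrank ℝ V = s := by
    rw [hV, finrank_span_eq_card hv.linearIndependent, Fintype.card_fin]
  have hKV : V' ⊔ (Submodule.span ℝ {ω}) = V := by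
    apply Submodule.eq_of_le_of_finrank_eq (sup_le hV'le hω'span)
    have h1 := Submodule.finrank_sup_add_finrank_inf_eq V' (Submodule.span ℝ {ω})
    rw [hdisj, finrank_bot, add_zero, hV'dim, finrank_span_singleton hωne] at h1
    rw [h1, hVdim, Nat.sub_add_cancel hs1]
  have hpV' : p ∈ V' := by
    have hpV : p ∈ V := Submodule.sub_mem _ hgV (Submodule.smul_mem _ _ hωV)
    rw [← hKV] at hpV
    obtain ⟨a, ha, b, hb, hab⟩ := Submodule.mem_sup.mp hpV
    obtain ⟨t, rfl⟩ := Submodule.mem_span_singleton.mp hb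
    have h0 : ⟪ω, a + t • ω⟫ = 0 := by rw [hab]; exact hωp
    rw [inner_add_right, hωperp _ ha, real_inner_smul_right, hωω] at h0
    have ht : t = 0 := by linarith
    rw [← hab, ht, zero_smul, add_zero]
    exact ha
  -- the projection is p
  have hproj : ((V'.orthogonalProjection F : H)) = p := by
    apply Submodule.eq_starProjection_of_mem_of_inner_eq_zero hpV'
    intro w hw
    have : F - p = (F - g) + c • ω := by rw [hp]; abel
    rw [this, inner_add_left, real_inner_comm w (F - g),
      horth w (hV'le hw), real_inner_smul_left, hωperp w hw]
    ring
  -- norms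
  have hFF : ⟪F, F⟫ = 1 := by
    rw [hF]
    have := hue.inner_sum z z Finset.univ
    simp only [Function.comp] at this
    rw [this]
    rw [← hznorm]
    apply Finset.sum_congr rfl
    intro α _
    simp [sq]
  have hgg : ⟪g, g⟫ = ∑ α : Fin (s - 1), (σ (e α) * z α) ^ 2 := by
    rw [hg]
    have := hve.inner_sum (fun α => σ (e α) * z α) (fun α => σ (e α) * z α) Finset.univ
    simp only [Function.comp] at this
    rw [this]
    apply Finset.sum_congr rfl
    intro α _
    simp [sq]
  have hgω : ⟪g, ω⟫ = c := by rw [real_inner_comm]; exact hωg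
  have hpp : ⟪p, p⟫ = (∑ α : Fin (s - 1), (σ (e α) * z α) ^ 2) - c ^ 2 := by
    rw [hp, inner_sub_left, inner_sub_right, inner_sub_right,
      real_inner_smul_left, real_inner_smul_left, real_inner_smul_right,
      real_inner_smul_right, hgg, hgω, hωg, hωω]
    ring
  -- eigenvalue identity
  have hquad : ∑ α, z α * Matrix.mulVec N₁ z α = lam := by
    rw [heig]
    simp only [Pi.smul_apply, smul_eq_mul]
    calc ∑ α, z α * (lam * z α) = lam * ∑ α, z α ^ 2 := by
          rw [Finset.mul_sum]; apply Finset.sum_congr rfl; intro α _; ring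
      _ = lam := by rw [hznorm, mul_one]
  have hlam : lam = (∑ α : Fin (s - 1), (1 - σ (e α) ^ 2) * z α ^ 2) + c ^ 2 := by
    rw [← hquad]
    simp only [Matrix.mulVec, dotProduct, hN₁]
    have hterm : ∀ α : Fin (s - 1), z α * (∑ β : Fin (s - 1),
        ((if α = β then 1 - σ (e α) ^ 2 else 0)
          + σ (e α) * d (e α) * (σ (e β) * d (e β))) * z β)
        = (1 - σ (e α) ^ 2) * z α ^ 2
          + (σ (e α) * d (e α) * z α) * ∑ β : Fin (s - 1), σ (e β) * d (e β) * z β := by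
      intro α
      have h1 : ∑ β : Fin (s - 1),
          ((if α = β then 1 - σ (e α) ^ 2 else 0)
            + σ (e α) * d (e α) * (σ (e β) * d (e β))) * z β
          = (∑ β : Fin (s - 1), (if α = β then (1 - σ (e α) ^ 2) * z β else 0))
            + ∑ β : Fin (s - 1), σ (e α) * d (e α) * (σ (e β) * d (e β) * z β) := by
        rw [← Finset.sum_add_distrib]
        apply Finset.sum_congr rfl
        intro β _
        by_cases h : α = β
        · subst h; simp; ring
        · simp [h]; ring
      rw [h1, Finset.sum_ite_eq, ← Finset.mul_sum]
      simp only [Finset.mem_univ, if_true]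
      ring
    rw [Finset.sum_congr rfl (fun α _ => hterm α), Finset.sum_add_distrib, ← Finset.sum_mul]
    rw [← hc]
    ring
  -- assemble
  intro f
  have hfF : f = F := rfl
  refine ⟨?_, ?_, ?_, ?_⟩
  · rw [hfF, hF]
    exact Submodule.sum_mem _ fun α _ =>
      Submodule.smul_mem _ _ (Submodule.subset_span ⟨α, rfl⟩)
  · have : ‖f‖ ^ 2 = 1 := by rw [hfF, ← real_inner_self_eq_norm_sq, hFF]
    nlinarith [norm_nonneg f]
  · rw [hfF, hproj, ← real_inner_self_eq_norm_sq, hpp, hlam]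
    have hsplit : ∑ α : Fin (s-1), (σ (e α) * z α) ^ 2
        = (∑ α : Fin (s-1), z α ^ 2) - ∑ α : Fin (s-1), (1 - σ (e α) ^ 2) * z α ^ 2 := by
      rw [← Finset.sum_sub_distrib]
      apply Finset.sum_congr rfl
      intro α _; ring
    rw [hsplit, hznorm]
    ring
  · rw [hfF, hproj]
    have hFp : ⟪F - p, p⟫ = 0 := by
      have : F - p = (F - g) + c • ω := by rw [hp]; abel
      rw [this, inner_add_left, real_inner_comm p (F - g),
        horth p (hV'le hpV'), real_inner_smul_left, hωperp p hpV']
      ring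
    have key : ⟪F - p, F - p⟫ = ⟪F, F⟫ - ⟪p, p⟫ := by
      have h2 : ⟪F - p, F⟫ = ⟪F - p, p⟫ + ⟪F - p, F - p⟫ := by
        rw [← inner_add_right]; congr 1; abel
      have h3 : ⟪F - p, F⟫ = ⟪F, F⟫ - ⟪p, F⟫ := by rw [inner_sub_left]
      have h4 : ⟪p, F⟫ = ⟪p, p⟫ + ⟪p, F - p⟫ := by
        rw [← inner_add_right]; congr 1; abel
      have h5 : ⟪p, F - p⟫ = 0 := by rw [real_inner_comm]; exact hFp
      linarith [h2, h3, h4, h5, hFp]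
    rw [← real_inner_self_eq_norm_sq, key, hFF, hpp, hlam]
    have hsplit : ∑ α : Fin (s-1), (σ (e α) * z α) ^ 2
        = (∑ α : Fin (s-1), z α ^ 2) - ∑ α : Fin (s-1), (1 - σ (e α) ^ 2) * z α ^ 2 := by
      rw [← Finset.sum_sub_distrib]
      apply Finset.sum_congr rfl
      intro α _; ring
    rw [hsplit, hznorm]
    ring
end

section
/- Let H be a real inner product space, let V ⊆ H be a finite-dimensional subspace, let u_1,…,u_a be an orthonormal family in H, let v_1,…,v_a be an orthonormal family in V, and let σ_1 ≥ σ_2 ≥ … ≥ σ_a ≥ 0 satisfy P_V u_j = σ_j v_j for all j ∈ {1,…,a}. Then for every k ∈ {1,…,a}: inf { ‖P_V x‖ / ‖x‖ : x ∈ span(u_1,…,u_{a−k+1}), x ≠ 0 } = σ_{a−k+1}, and the infimum is attained at x = u_{a−k+1}. -/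
lemma norm_sum_sq_of_orthonormal {H : Type*} [NormedAddCommGroup H] [InnerProductSpace ℝ H]
    {a : ℕ} {w : Fin a → H} (hw : Orthonormal ℝ w) (c : Fin a → ℝ) :
    ‖∑ i, c i • w i‖ ^ 2 = ∑ i, (c i) ^ 2 := by
  rw [← real_inner_self_eq_norm_sq, hw.inner_sum]
  simp [sq]


/-- Let `V` be a finite-dimensional subspace of a real inner product
space, `u₁,…,u_a` orthonormal, `v₁,…,v_a` orthonormal in `V`, and `σ₁ ≥ … ≥ σ_a ≥ 0` with
`P_V uⱼ = σⱼ vⱼ`.  Then for every `k ∈ {1,…,a}`,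
`inf { ‖P_V x‖/‖x‖ : x ∈ span(u₁,…,u_{a−k+1}), x ≠ 0 } = σ_{a−k+1}`, and the infimum is
attained at `x = u_{a−k+1}`.  (Indices are `0`-based below: `a−k+1 ↔ ⟨a−k, _⟩`.) -/
theorem stmt_16 {H : Type*} [NormedAddCommGroup H] [InnerProductSpace ℝ H] {a : ℕ}
    (V : Submodule ℝ H) [FiniteDimensional ℝ V]
    (u v : Fin a → H) (hu : Orthonormal ℝ u) (hv : Orthonormal ℝ v)
    (hvV : ∀ j, v j ∈ V)
    (σ : Fin a → ℝ) (hσdec : Antitone σ) (hσnonneg : ∀ j, 0 ≤ σ j)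
    (hproj : ∀ j, (V.orthogonalProjection (u j) : H) = σ j • v j)
    (k : ℕ) (hk1 : 1 ≤ k) (hka : k ≤ a) :
    IsLeast {r : ℝ | ∃ x ∈ Submodule.span ℝ (u '' {i : Fin a | (i : ℕ) ≤ a - k}),
        x ≠ 0 ∧ r = ‖(V.orthogonalProjection x : H)‖ / ‖x‖}
      (σ ⟨a - k, by omega⟩) ∧
    ‖(V.orthogonalProjection (u ⟨a - k, by omega⟩) : H)‖ / ‖u ⟨a - k, by omega⟩‖
      = σ ⟨a - k, by omega⟩ := by
  set m : Fin a := ⟨a - k, by omega⟩ with hm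
  have hum : ‖u m‖ = 1 := hu.1 m
  have hvm : ‖v m‖ = 1 := hv.1 m
  have hattain : ‖(V.orthogonalProjection (u m) : H)‖ / ‖u m‖ = σ m := by
    rw [hproj, norm_smul, hvm, hum]
    simp [Real.norm_eq_abs, abs_of_nonneg (hσnonneg m)]
  refine ⟨⟨⟨u m, ?_, ?_, hattain.symm⟩, ?_⟩, hattain⟩
  · exact Submodule.subset_span ⟨m, show (m : ℕ) ≤ a - k from le_refl _, rfl⟩
  · intro h
    have := hum
    rw [h, norm_zero] at this
    norm_num at this
  · rintro r ⟨x, hx, hx0, rfl⟩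
    rw [Finsupp.mem_span_image_iff_linearCombination] at hx
    obtain ⟨l, hl, rfl⟩ := hx
    rw [Finsupp.mem_supported] at hl
    have hxeq : Finsupp.linearCombination ℝ u l = ∑ i, l i • u i := by
      rw [Finsupp.linearCombination_apply, Finsupp.sum_fintype]
      intro i; simp
    have hlz : ∀ i : Fin a, ¬ ((i : ℕ) ≤ a - k) → l i = 0 := by
      intro i hi
      by_contra h
      exact hi (hl (Finsupp.mem_support_iff.mpr h))
    have hPx : (V.orthogonalProjection (Finsupp.linearCombination ℝ u l) : H)
        = ∑ i, (l i * σ i) • v i := by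
      rw [hxeq, map_sum]
      push_cast [Submodule.coe_sum]
      congr 1
      ext i
      rw [map_smul]
      push_cast
      rw [hproj i, smul_smul]
    have hnx : ‖Finsupp.linearCombination ℝ u l‖ ^ 2 = ∑ i, (l i) ^ 2 := by
      rw [hxeq]; exact norm_sum_sq_of_orthonormal hu _
    have hnPx : ‖(V.orthogonalProjection (Finsupp.linearCombination ℝ u l) : H)‖ ^ 2
        = ∑ i, (l i * σ i) ^ 2 := by
      rw [hPx]; exact norm_sum_sq_of_orthonormal hv _
    have hxpos : 0 < ‖Finsupp.linearCombination ℝ u l‖ := norm_pos_iff.mpr hx0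
    rw [le_div_iff₀ hxpos]
    have hsq : (σ m * ‖Finsupp.linearCombination ℝ u l‖) ^ 2
        ≤ ‖(V.orthogonalProjection (Finsupp.linearCombination ℝ u l) : H)‖ ^ 2 := by
      rw [mul_pow, hnx, hnPx, Finset.mul_sum]
      apply Finset.sum_le_sum
      intro i _
      by_cases hi : (i : ℕ) ≤ a - k
      · have hσi : σ m ≤ σ i := hσdec (by simp [hm, Fin.le_def]; omega)
        have h2 : σ m ^ 2 ≤ σ i ^ 2 := by nlinarith [hσnonneg m]
        calc σ m ^ 2 * l i ^ 2 ≤ σ i ^ 2 * l i ^ 2 :=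
              mul_le_mul_of_nonneg_right h2 (by positivity)
          _ = (l i * σ i) ^ 2 := by ring
      · rw [hlz i hi]; simp
    nlinarith [norm_nonneg ((V.orthogonalProjection (Finsupp.linearCombination ℝ u l) : H)),
      mul_nonneg (hσnonneg m) hxpos.le]
end
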